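/- arXiv:2305.01769 — 6 statements merged into one kernel-verified Lean document; each statement's English description precedes it below -/
import Mathlib

section
/- Let H be a finite simple graph with maximum degree δ, let w : ℕ → ℝ be 1-concave with w(2) − w(1) < 1, and let E be the approval election whose candidates are the vertices of H and whose voters are: for each edge {u,v} of H, one voter approving exactly {u,v}; and for each vertex v, exactly δ − d(v) voters approving exactly {v}, where d(v) is the degree of v. Then every size-k committee S has w-score at most δk, with equality if and only if S is an independent set of H; moreover, if S is not independent then its w-score is at most (δk − 1) + (w(2) − w(1)). -/
open Finset

/-- The `w`-score of a committee `S`. -/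
def wScore {C V : Type} [DecidableEq C] [Fintype V]
    (w : ℕ → ℝ) (A : V → Finset C) (S : Finset C) : ℝ :=
  ∑ v : V, w ((A v ∩ S).card)

/-- A finite set of vertices is independent: no two of its members are adjacent. -/
def IsIndepFinset {α : Type} (G : SimpleGraph α) (S : Finset α) : Prop :=
  ∀ u ∈ S, ∀ v ∈ S, ¬ G.Adj u v

/-- The voters of the election built from a graph `H` with degree bound `δ`:
one voter per edge, and `δ - d(v)` voters per vertex `v`. -/
abbrev GraphVoter {α : Type} [Fintype α] [DecidableEq α]
    (H : SimpleGraph α) [DecidableRel H.Adj] (δ : ℕ) : Type :=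
  ↥H.edgeFinset ⊕ (Σ v : α, Fin (δ - H.degree v))

/-- The approval sets: the voter of edge `{u,v}` approves exactly `{u,v}`; each of the
`δ - d(v)` voters of vertex `v` approves exactly `{v}`. -/
def graphApproval {α : Type} [Fintype α] [DecidableEq α]
    (H : SimpleGraph α) [DecidableRel H.Adj] (δ : ℕ) :
    GraphVoter H δ → Finset α
  | .inl e => Finset.univ.filter (fun x => x ∈ (e : Sym2 α))
  | .inr ⟨v, _⟩ => {v}

theorem stmt1 {α : Type} [Fintype α] [DecidableEq α]
    (H : SimpleGraph α) [DecidableRel H.Adj] (δ : ℕ)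
    (hδ : ∀ v : α, H.degree v ≤ δ)
    (w : ℕ → ℝ) (hw0 : w 0 = 0) (hw1 : w 1 = 1) (hmono : Monotone w)
    (hconc : ∀ i : ℕ, 1 ≤ i → w i - w (i - 1) ≥ w (i + 1) - w i)
    (hx : w 2 - w 1 < 1) (k : ℕ) (S : Finset α) (hS : S.card = k) :
    wScore w (graphApproval H δ) S ≤ δ * k
    ∧ (wScore w (graphApproval H δ) S = δ * k ↔ IsIndepFinset H S)
    ∧ (¬ IsIndepFinset H S →
        wScore w (graphApproval H δ) S ≤ (δ * k - 1) + (w 2 - w 1)) := by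
  classical
  subst hS
  set n : Sym2 α → ℕ := fun e => (S.filter (· ∈ e)).card with hn
  set t : ℕ := (H.edgeFinset.filter (fun e => n e = 2)).card with ht
  -- every edge meets S in at most 2 vertices
  have hle2 : ∀ e : Sym2 α, n e ≤ 2 := by
    intro e
    induction e with
    | _ u v =>
      calc (S.filter (· ∈ s(u, v))).card ≤ ({u,v} : Finset α).card := by
            apply Finset.card_le_card
            intro x hx
            simp only [Finset.mem_filter, Sym2.mem_iff] at hx
            simp [hx.2]
        _ ≤ 2 := Finset.card_insert_le _ _ |>.trans (by simp)
  -- pointwise rewrite of w on edges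
  have hwpt : ∀ e : Sym2 α, w (n e) = (n e : ℝ) - (2 - w 2) * (if n e = 2 then 1 else 0) := by
    intro e
    have := hle2 e
    interval_cases h : n e <;> simp [hw0, hw1]
  -- decomposition of the score
  have hdecomp : wScore w (graphApproval H δ) S
      = (∑ e ∈ H.edgeFinset, w (n e)) + ∑ v ∈ S, ((δ : ℝ) - H.degree v) := by
    unfold wScore
    rw [Fintype.sum_sum_type]
    congr 1
    · rw [← Finset.sum_coe_sort H.edgeFinset (fun e => w (n e))]
      refine Finset.sum_congr rfl fun e _ => ?_
      congr 1
      simp only [graphApproval, hn]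
      congr 1
      ext x; simp [and_comm]
    · rw [← Finset.univ_sigma_univ, Finset.sum_sigma]
      have : ∀ v : α, ∑ _i : Fin (δ - H.degree v), w ((graphApproval H δ (.inr ⟨v, _i⟩) ∩ S).card)
          = if v ∈ S then ((δ : ℝ) - H.degree v) else 0 := by
        intro v
        simp only [graphApproval]
        rw [Finset.sum_const, Finset.card_univ, Fintype.card_fin]
        by_cases hv : v ∈ S
        · rw [Finset.singleton_inter_of_mem hv]
          simp [hv, hw1, Nat.cast_sub (hδ v)]
        · rw [Finset.singleton_inter_of_notMem hv]
          simp [hv, hw0]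
      rw [Finset.sum_congr rfl fun v _ => this v]
      simp [Finset.sum_ite_mem]
  -- double counting
  have hdc : ∑ e ∈ H.edgeFinset, n e = ∑ v ∈ S, H.degree v := by
    simp only [hn, Finset.card_filter]
    rw [Finset.sum_comm]
    refine Finset.sum_congr rfl fun v hv => ?_
    rw [← Finset.card_filter, ← SimpleGraph.incidenceFinset_eq_filter,
      SimpleGraph.card_incidenceFinset_eq_degree]
  -- main exact identity
  have hmain : wScore w (graphApproval H δ) S = δ * S.card - (2 - w 2) * t := by
    rw [hdecomp, Finset.sum_congr rfl fun e _ => hwpt e]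
    rw [Finset.sum_sub_distrib, ← Finset.mul_sum, Finset.sum_boole, ← ht]
    have h1 : ∑ e ∈ H.edgeFinset, ((n e : ℝ)) = ∑ v ∈ S, (H.degree v : ℝ) := by
      rw [← Nat.cast_sum, ← Nat.cast_sum, hdc]
    rw [h1]
    have h2 : ∑ v ∈ S, (H.degree v : ℝ) + ∑ v ∈ S, ((δ : ℝ) - H.degree v)
        = δ * S.card := by
      rw [← Finset.sum_add_distrib]
      simp [mul_comm]
    linarith [h2]
  -- t = 0 iff independent
  have hindep : IsIndepFinset H S ↔ t = 0 := by
    constructor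
    · intro hI
      rw [ht, Finset.card_eq_zero, Finset.filter_eq_empty_iff]
      intro e he
      induction e with
      | _ u v =>
        intro h2
        have hadj : H.Adj u v := by
          rwa [SimpleGraph.mem_edgeFinset, SimpleGraph.mem_edgeSet] at he
        have hsub : S.filter (· ∈ s(u, v)) ⊆ {u, v} := by
          intro x hx
          simp only [Finset.mem_filter, Sym2.mem_iff] at hx
          simp [hx.2]
        have hcard : ({u, v} : Finset α).card = 2 := Finset.card_pair hadj.ne
        have heq : S.filter (· ∈ s(u, v)) = {u, v} :=
          Finset.eq_of_subset_of_card_le hsub (by rw [hcard]; exact le_of_eq h2.symm)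
        have hu : u ∈ S := by
          have : u ∈ S.filter (· ∈ s(u, v)) := by rw [heq]; simp
          exact (Finset.mem_filter.mp this).1
        have hv : v ∈ S := by
          have : v ∈ S.filter (· ∈ s(u, v)) := by rw [heq]; simp
          exact (Finset.mem_filter.mp this).1
        exact hI u hu v hv hadj
    · intro h0 u hu v hv hadj
      rw [ht, Finset.card_eq_zero, Finset.filter_eq_empty_iff] at h0
      have he : s(u, v) ∈ H.edgeFinset := by
        rw [SimpleGraph.mem_edgeFinset, SimpleGraph.mem_edgeSet]; exact hadj
      apply h0 he
      have hsub : ({u, v} : Finset α) ⊆ S.filter (· ∈ s(u, v)) := by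
        intro x hx
        simp only [Finset.mem_insert, Finset.mem_singleton] at hx
        rcases hx with rfl | rfl <;> simp [hu, hv]
      have h1 : 2 ≤ n (s(u, v)) := by
        calc 2 = ({u, v} : Finset α).card := (Finset.card_pair hadj.ne).symm
          _ ≤ _ := Finset.card_le_card hsub
      exact le_antisymm (hle2 _) h1
  have hc : (0 : ℝ) < 2 - w 2 := by rw [hw1] at hx; linarith
  refine ⟨?_, ?_, ?_⟩
  · rw [hmain]
    have : (0 : ℝ) ≤ (2 - w 2) * t := by positivity
    linarith
  · rw [hmain, hindep]
    constructor
    · intro h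
      have : (2 - w 2) * t = 0 := by linarith
      have := (mul_eq_zero.mp this).resolve_left (by linarith)
      exact_mod_cast this
    · intro h; rw [h]; simp
  · intro hI
    rw [hindep] at hI
    have h1 : (1 : ℝ) ≤ t := by
      have : 1 ≤ t := Nat.one_le_iff_ne_zero.mpr hI
      exact_mod_cast this
    rw [hmain, hw1]
    nlinarith
end

section
/- Let G be a finite simple graph, k ≥ 1, and let w : ℕ → ℝ be 1-concave with w(2) − w(1) < 1. Let G' be obtained from G by adding k new vertices adjacent to all vertices of G and pairwise non-adjacent, let δ be the maximum degree of G', and let E be the election whose candidates are the vertices of G' with one voter approving {u,v} for each edge {u,v} of G' and δ − d(v) voters approving {v} for each vertex v of G'. Then the winning size-k committees of E under the w-Thiele rule are exactly the size-k independent sets of G'; in particular, E has a unique winning size-k committee if and only if G has no size-k independent set. -/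
open Finset

/-- The graph `G'` obtained from `G` by adding `k` new vertices, each adjacent to
every old vertex, with the new vertices pairwise non-adjacent. -/
def extGraph {α : Type} (G : SimpleGraph α) (k : ℕ) : SimpleGraph (α ⊕ Fin k) where
  Adj x y :=
    match x, y with
    | .inl u, .inl v => G.Adj u v
    | .inl _, .inr _ => True
    | .inr _, .inl _ => True
    | .inr _, .inr _ => False
  symm := by
    constructor
    intro x y h
    cases x <;> cases y <;> simp_all
    exact h.symm
  loopless := by
    constructor
    intro x
    cases x <;> simp

instance {α : Type} (G : SimpleGraph α) [DecidableRel G.Adj] (k : ℕ) :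
    DecidableRel (extGraph G k).Adj
  | .inl u, .inl v => decidable_of_iff (G.Adj u v) Iff.rfl
  | .inl _, .inr _ => .isTrue trivial
  | .inr _, .inl _ => .isTrue trivial
  | .inr _, .inr _ => .isFalse id

section Helpers
variable {α : Type} [Fintype α] [DecidableEq α]

def inEdges (H : SimpleGraph α) [DecidableRel H.Adj] (S : Finset α) : Finset (Sym2 α) :=
  H.edgeFinset.filter (fun e => (S.filter (· ∈ e)).card = 2)

lemma score_eq (H : SimpleGraph α) [DecidableRel H.Adj] (δ : ℕ)
    (hδ : ∀ v, H.degree v ≤ δ) (w : ℕ → ℝ) (hw0 : w 0 = 0) (hw1 : w 1 = 1)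
    (S : Finset α) :
    wScore w (graphApproval H δ) S
      = δ * S.card + (inEdges H S).card * (w 2 - 2) := by
  classical
  have key : ∀ e : Sym2 α, (S.filter (· ∈ e)).card ≤ 2 := by
    intro e
    induction e with
    | _ u v =>
      have h1 : S.filter (· ∈ s(u,v)) ⊆ {u, v} := by
        intro x hx
        simp only [mem_filter, Sym2.mem_iff] at hx
        simp [hx.2]
      have h2 : ({u, v} : Finset α).card ≤ 2 := (card_insert_le _ _).trans (by simp)
      exact (card_le_card h1).trans h2
  have hwc : ∀ e : Sym2 α, w ((S.filter (· ∈ e)).card)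
      = ((S.filter (· ∈ e)).card : ℝ) + (if (S.filter (· ∈ e)).card = 2 then w 2 - 2 else 0) := by
    intro e
    have h2 := key e
    interval_cases h : (S.filter (· ∈ e)).card <;> simp [hw0, hw1] <;> ring
  rw [wScore, Fintype.sum_sum_type]
  have hinl : (∑ e : ↥H.edgeFinset, w ((graphApproval H δ (.inl e) ∩ S).card))
      = ∑ v ∈ S, (H.degree v : ℝ) + (inEdges H S).card * (w 2 - 2) := by
    have : ∀ e : ↥H.edgeFinset, w ((graphApproval H δ (.inl e) ∩ S).card)
        = w ((S.filter (· ∈ (e : Sym2 α))).card) := by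
      intro e
      congr 2
      ext x; simp [graphApproval, and_comm]
    rw [Finset.sum_congr rfl (fun e _ => this e)]
    rw [Finset.sum_coe_sort H.edgeFinset (fun e => w ((S.filter (· ∈ e)).card))]
    rw [Finset.sum_congr rfl (fun e _ => hwc e)]
    rw [Finset.sum_add_distrib]
    congr 1
    · -- handshake part
      have : ∀ e ∈ H.edgeFinset, ((S.filter (· ∈ e)).card : ℝ) = ∑ v ∈ S, (if v ∈ e then (1:ℝ) else 0) := by
        intro e _
        rw [Finset.card_filter]
        push_cast
        rfl
      rw [Finset.sum_congr rfl this, Finset.sum_comm]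
      refine Finset.sum_congr rfl (fun v hv => ?_)
      rw [← Finset.sum_filter]
      simp only [Finset.sum_const, smul_eq_mul, mul_one]
      rw [← SimpleGraph.incidenceFinset_eq_filter, SimpleGraph.card_incidenceFinset_eq_degree]
      simp
    · rw [← Finset.sum_filter]
      simp [inEdges, mul_comm]
      ring
  have hinr : (∑ x : (Σ v : α, Fin (δ - H.degree v)), w ((graphApproval H δ (.inr x) ∩ S).card))
      = ∑ v ∈ S, ((δ : ℝ) - H.degree v) := by
    rw [← Finset.univ_sigma_univ, Finset.sum_sigma]
    have : ∀ v : α, (∑ i : Fin (δ - H.degree v), w ((graphApproval H δ (.inr ⟨v, i⟩) ∩ S).card))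
        = (if v ∈ S then ((δ : ℝ) - H.degree v) else 0) := by
      intro v
      have h1 : ∀ i : Fin (δ - H.degree v), (graphApproval H δ (.inr ⟨v, i⟩) ∩ S) = if v ∈ S then {v} else ∅ := by
        intro i
        simp [graphApproval, Finset.singleton_inter]
      by_cases hv : v ∈ S <;>
        simp [h1, hv, hw0, hw1, Finset.sum_const, Nat.cast_sub (hδ v)]
    rw [Finset.sum_congr rfl (fun v _ => this v), ← Finset.sum_filter]
    simp
  rw [hinl, hinr]
  rw [add_right_comm, add_comm (∑ v ∈ S, (H.degree v : ℝ)) _, ← Finset.sum_add_distrib]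
  have : ∀ v ∈ S, ((δ:ℝ) - H.degree v) + (H.degree v : ℝ) = (δ : ℝ) := by intro v _; ring
  rw [Finset.sum_congr rfl this, Finset.sum_const]
  push_cast
  ring

lemma inEdges_eq_empty_iff (H : SimpleGraph α) [DecidableRel H.Adj] (S : Finset α) :
    inEdges H S = ∅ ↔ IsIndepFinset H S := by
  constructor
  · intro h u hu v hv hadj
    have hne : u ≠ v := hadj.ne
    have he : s(u, v) ∈ H.edgeFinset := by
      rw [SimpleGraph.mem_edgeFinset, SimpleGraph.mem_edgeSet]; exact hadj
    have hfil : S.filter (· ∈ s(u, v)) = {u, v} := by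
      ext x
      simp only [mem_filter, Sym2.mem_iff, mem_insert, mem_singleton]
      constructor
      · rintro ⟨_, h⟩; exact h
      · rintro (rfl | rfl) <;> simp [hu, hv]
    have : s(u, v) ∈ inEdges H S := by
      rw [inEdges, mem_filter]
      refine ⟨he, ?_⟩
      rw [hfil, card_insert_of_notMem (by simp [hne]), card_singleton]
    simp [h] at this
  · intro hind
    rw [eq_empty_iff_forall_notMem]
    intro e he
    rw [inEdges, mem_filter] at he
    obtain ⟨he1, he2⟩ := he
    induction e with
    | _ u v =>
      have hne : u ≠ v := by
        intro h
        rw [SimpleGraph.mem_edgeFinset, SimpleGraph.mem_edgeSet, h] at he1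
        exact H.loopless.irrefl v he1
      have hsub : S.filter (· ∈ s(u, v)) ⊆ {u, v} := by
        intro x hx
        simp only [mem_filter, Sym2.mem_iff] at hx
        simp [hx.2]
      have hcard2 : ({u, v} : Finset α).card = 2 := by
        rw [card_insert_of_notMem (by simp [hne]), card_singleton]
      have heq : S.filter (· ∈ s(u, v)) = {u, v} :=
        eq_of_subset_of_card_le hsub (by rw [hcard2, he2])
      have hu : u ∈ S := by
        have : u ∈ S.filter (· ∈ s(u, v)) := heq ▸ (by simp)
        exact (mem_filter.1 this).1
      have hv : v ∈ S := by
        have : v ∈ S.filter (· ∈ s(u, v)) := heq ▸ (by simp)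
        exact (mem_filter.1 this).1
      exact hind u hu v hv (by rwa [SimpleGraph.mem_edgeFinset, SimpleGraph.mem_edgeSet] at he1)

end Helpers

theorem stmt2 {α : Type} [Fintype α] [DecidableEq α]
    (G : SimpleGraph α) [DecidableRel G.Adj] (k : ℕ) (hk : 1 ≤ k)
    (w : ℕ → ℝ) (hw0 : w 0 = 0) (hw1 : w 1 = 1) (hmono : Monotone w)
    (hconc : ∀ i : ℕ, 1 ≤ i → w i - w (i - 1) ≥ w (i + 1) - w i)
    (hx : w 2 - w 1 < 1) (δ : ℕ)
    (hδ : ∀ v : α ⊕ Fin k, (extGraph G k).degree v ≤ δ) :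
    (∀ S : Finset (α ⊕ Fin k), S.card = k →
      ((∀ S' : Finset (α ⊕ Fin k), S'.card = k →
          wScore w (graphApproval (extGraph G k) δ) S'
            ≤ wScore w (graphApproval (extGraph G k) δ) S)
        ↔ IsIndepFinset (extGraph G k) S))
    ∧ ((∃! S : Finset (α ⊕ Fin k), S.card = k ∧
          ∀ S' : Finset (α ⊕ Fin k), S'.card = k →
            wScore w (graphApproval (extGraph G k) δ) S'
              ≤ wScore w (graphApproval (extGraph G k) δ) S)
        ↔ ¬ ∃ T : Finset α, T.card = k ∧ IsIndepFinset G T) := by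
  classical
  set H := extGraph G k with hH
  have hw2 : w 2 - 2 < 0 := by linarith
  have hsc := score_eq H δ hδ w hw0 hw1
  -- the all-new-vertices committee
  set S₀ : Finset (α ⊕ Fin k) := (univ : Finset (Fin k)).image Sum.inr with hS₀
  have hS₀card : S₀.card = k := by
    rw [hS₀, card_image_of_injective _ Sum.inr_injective, card_univ, Fintype.card_fin]
  have hS₀indep : IsIndepFinset H S₀ := by
    intro u hu v hv
    rw [hS₀, mem_image] at hu hv
    obtain ⟨i, _, rfl⟩ := hu
    obtain ⟨j, _, rfl⟩ := hv
    exact id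
  have hwin_of_indep : ∀ S : Finset (α ⊕ Fin k), S.card = k → IsIndepFinset H S →
      ∀ S' : Finset (α ⊕ Fin k), S'.card = k →
        wScore w (graphApproval H δ) S' ≤ wScore w (graphApproval H δ) S := by
    intro S hS hind S' hS'
    rw [hsc S, hsc S', hS, hS', (inEdges_eq_empty_iff H S).2 hind]
    have h1 : (0 : ℝ) ≤ ((inEdges H S').card : ℝ) := Nat.cast_nonneg _
    simp only [card_empty, Nat.cast_zero, zero_mul]
    nlinarith
  have part1 : ∀ S : Finset (α ⊕ Fin k), S.card = k →
      ((∀ S' : Finset (α ⊕ Fin k), S'.card = k →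
          wScore w (graphApproval H δ) S' ≤ wScore w (graphApproval H δ) S)
        ↔ IsIndepFinset H S) := by
    intro S hS
    constructor
    · intro hwin
      have h0 := hwin S₀ hS₀card
      rw [hsc S, hsc S₀, hS, hS₀card, (inEdges_eq_empty_iff H S₀).2 hS₀indep] at h0
      simp only [card_empty, Nat.cast_zero, zero_mul] at h0
      have hm : (inEdges H S).card = 0 := by
        by_contra hm
        have h1 : (1 : ℝ) ≤ ((inEdges H S).card : ℝ) := by
          exact_mod_cast Nat.one_le_iff_ne_zero.2 hm
        nlinarith
      exact (inEdges_eq_empty_iff H S).1 (card_eq_zero.1 hm)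
    · intro hind
      exact hwin_of_indep S hS hind
  refine ⟨part1, ?_⟩
  constructor
  · rintro ⟨S, ⟨hScard, hSwin⟩, huniq⟩ ⟨T, hT, hTind⟩
    set T' : Finset (α ⊕ Fin k) := T.image Sum.inl with hT'
    have hT'card : T'.card = k := by
      rw [hT', card_image_of_injective _ Sum.inl_injective, hT]
    have hT'ind : IsIndepFinset H T' := by
      intro u hu v hv
      rw [hT', mem_image] at hu hv
      obtain ⟨a, ha, rfl⟩ := hu
      obtain ⟨b, hb, rfl⟩ := hv
      exact hTind a ha b hb
    have e1 : S₀ = S := huniq S₀ ⟨hS₀card, hwin_of_indep S₀ hS₀card hS₀indep⟩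
    have e2 : T' = S := huniq T' ⟨hT'card, hwin_of_indep T' hT'card hT'ind⟩
    have : (Sum.inr ⟨0, hk⟩ : α ⊕ Fin k) ∈ T' := by
      rw [e2, ← e1, hS₀, mem_image]
      exact ⟨⟨0, hk⟩, mem_univ _, rfl⟩
    rw [hT', mem_image] at this
    obtain ⟨a, _, h⟩ := this
    exact Sum.inl_ne_inr h
  · intro hno
    refine ⟨S₀, ⟨hS₀card, hwin_of_indep S₀ hS₀card hS₀indep⟩, ?_⟩
    rintro S ⟨hScard, hSwin⟩
    have hind : IsIndepFinset H S := (part1 S hScard).1 hSwin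
    by_cases hl : ∃ a : α, Sum.inl a ∈ S
    · obtain ⟨a, ha⟩ := hl
      by_cases hr : ∃ i : Fin k, Sum.inr i ∈ S
      · obtain ⟨i, hi⟩ := hr
        exact absurd trivial (hind _ ha _ hi)
      · exfalso
        apply hno
        set T : Finset α := S.preimage Sum.inl (Sum.inl_injective.injOn) with hTdef
        have hSeq : S = T.image Sum.inl := by
          ext x
          cases x with
          | inl a' => simp [hTdef]
          | inr i =>
            simp only [mem_image]
            constructor
            · intro h; exact absurd ⟨i, h⟩ hr
            · rintro ⟨b, _, h⟩; exact absurd h (Sum.inl_ne_inr)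
        refine ⟨T, ?_, ?_⟩
        · have := hScard
          rw [hSeq, card_image_of_injective _ Sum.inl_injective] at this
          exact this
        · intro u hu v hv hadj
          rw [mem_preimage] at hu hv
          exact hind _ hu _ hv hadj
    · have hsub : S ⊆ S₀ := by
        intro x hx
        cases x with
        | inl a => exact absurd ⟨a, hx⟩ hl
        | inr i => rw [hS₀, mem_image]; exact ⟨i, mem_univ _, rfl⟩
      exact eq_of_subset_of_card_le hsub (by rw [hScard, hS₀card])
end

section
/- Let G be a finite simple graph, let w : ℕ → ℝ be 1-concave with w(2) < 2, and let E(G) be the edge election of G. Then for every set W of k edge-candidates, the w-score of W in E(G) is at most 2k, with equality if and only if W is a size-k matching of G; if W is not a matching then its w-score is strictly less than 2k. -/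
open Finset

/-- Approval sets of the edge election of a graph `G`: the candidates are the edges of
`G`, the voters are the vertices, and each vertex approves exactly its incident edges. -/
def edgeApproval {α : Type} [Fintype α] [DecidableEq α]
    (G : SimpleGraph α) [DecidableRel G.Adj] (v : α) : Finset ↥G.edgeFinset :=
  Finset.univ.filter (fun e => v ∈ (e : Sym2 α))

/-- A finite set of edge candidates is a matching if no two of its edges share a vertex. -/
def IsMatchingFinset {α : Type} [Fintype α] [DecidableEq α]
    (G : SimpleGraph α) [DecidableRel G.Adj] (M : Finset ↥G.edgeFinset) : Prop :=
  ∀ e ∈ M, ∀ f ∈ M, e ≠ f → ∀ x : α, x ∈ (e : Sym2 α) → x ∉ (f : Sym2 α)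

lemma step_le {w : ℕ → ℝ} (hw0 : w 0 = 0) (hw1 : w 1 = 1)
    (hconc : ∀ i : ℕ, 1 ≤ i → w i - w (i - 1) ≥ w (i + 1) - w i) :
    ∀ i, w (i + 1) - w i ≤ 1 := by
  intro i
  induction i with
  | zero => simp [hw0, hw1]
  | succ n ih =>
    have h := hconc (n + 1) (Nat.le_add_left 1 n)
    simp at h
    linarith

lemma w_le_n {w : ℕ → ℝ} (hw0 : w 0 = 0) (hw1 : w 1 = 1)
    (hconc : ∀ i : ℕ, 1 ≤ i → w i - w (i - 1) ≥ w (i + 1) - w i) :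
    ∀ n, w n ≤ n := by
  intro n
  induction n with
  | zero => simp [hw0]
  | succ n ih =>
    have := step_le hw0 hw1 hconc n
    push_cast
    linarith

lemma w_lt_n {w : ℕ → ℝ} (hw0 : w 0 = 0) (hw1 : w 1 = 1)
    (hconc : ∀ i : ℕ, 1 ≤ i → w i - w (i - 1) ≥ w (i + 1) - w i)
    (hw2 : w 2 < 2) : ∀ n, 2 ≤ n → w n < n := by
  intro n hn
  induction n, hn using Nat.le_induction with
  | base => simpa using hw2
  | succ n hn ih =>
    have := step_le hw0 hw1 hconc n
    push_cast
    linarith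

theorem stmt9 {α : Type} [Fintype α] [DecidableEq α]
    (G : SimpleGraph α) [DecidableRel G.Adj]
    (w : ℕ → ℝ) (hw0 : w 0 = 0) (hw1 : w 1 = 1) (hmono : Monotone w)
    (hconc : ∀ i : ℕ, 1 ≤ i → w i - w (i - 1) ≥ w (i + 1) - w i)
    (hw2 : w 2 < 2) (k : ℕ) (W : Finset ↥G.edgeFinset) (hW : W.card = k) :
    wScore w (edgeApproval G) W ≤ 2 * k
    ∧ (wScore w (edgeApproval G) W = 2 * k ↔ IsMatchingFinset G W)
    ∧ (¬ IsMatchingFinset G W → wScore w (edgeApproval G) W < 2 * k) := by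
  classical
  set d : α → ℕ := fun v => (edgeApproval G v ∩ W).card with hd
  -- d v counts edges of W containing v
  have hdv : ∀ v, d v = (W.filter (fun e => v ∈ (e.1 : Sym2 α))).card := by
    intro v
    have h : edgeApproval G v ∩ W = W.filter (fun e => v ∈ (e.1 : Sym2 α)) := by
      ext e
      simp [edgeApproval, and_comm]
    show (edgeApproval G v ∩ W).card = _
    rw [h]
  -- each edge has exactly two endpoints
  have hedge : ∀ e : ↥G.edgeFinset,
      (univ.filter (fun v : α => v ∈ (e : Sym2 α))).card = 2 := by
    rintro ⟨e, he⟩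
    rw [SimpleGraph.mem_edgeFinset] at he
    induction e with
    | h a b =>
      have hab : a ≠ b := ((SimpleGraph.mem_edgeSet G).mp he).ne
      have : (univ.filter (fun v : α => v ∈ (s(a, b) : Sym2 α))) = {a, b} := by
        ext v
        simp [Sym2.mem_iff]
      rw [this, card_pair hab]
  -- handshake
  have hsum : ∑ v : α, d v = 2 * k := by
    calc ∑ v : α, d v = ∑ v : α, ∑ e ∈ W, if v ∈ (e.1 : Sym2 α) then 1 else 0 := by
          refine Finset.sum_congr rfl fun v _ => ?_
          rw [hdv v, card_filter]
      _ = ∑ e ∈ W, ∑ v : α, if v ∈ (e.1 : Sym2 α) then 1 else 0 := Finset.sum_comm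
      _ = ∑ e ∈ W, (univ.filter (fun v : α => v ∈ (e : Sym2 α))).card := by
          refine Finset.sum_congr rfl fun e _ => ?_
          rw [card_filter]
      _ = ∑ e ∈ W, 2 := Finset.sum_congr rfl fun e _ => hedge e
      _ = 2 * k := by rw [Finset.sum_const, hW]; ring
  have hsumR : ∑ v : α, (d v : ℝ) = 2 * k := by
    have : ((∑ v : α, d v : ℕ) : ℝ) = ((2 * k : ℕ) : ℝ) := by rw [hsum]
    push_cast at this
    exact this
  -- matching iff d v ≤ 1
  have hmatch : IsMatchingFinset G W ↔ ∀ v, d v ≤ 1 := by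
    constructor
    · intro hM v
      rw [hdv v, card_le_one]
      intro e he f hf
      rw [mem_filter] at he hf
      by_contra hne
      exact hM e he.1 f hf.1 hne v he.2 hf.2
    · intro h e he f hf hne v hve hvf
      have := h v
      rw [hdv v, card_le_one] at this
      exact hne (this e (mem_filter.mpr ⟨he, hve⟩) f (mem_filter.mpr ⟨hf, hvf⟩))
  have hle_pt : ∀ v : α, w (d v) ≤ (d v : ℝ) := fun v => w_le_n hw0 hw1 hconc (d v)
  have hscore : wScore w (edgeApproval G) W = ∑ v : α, w (d v) := rfl
  have hle : wScore w (edgeApproval G) W ≤ 2 * k := by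
    rw [hscore, ← hsumR]
    exact Finset.sum_le_sum fun v _ => hle_pt v
  have hstrict : ¬ IsMatchingFinset G W → wScore w (edgeApproval G) W < 2 * k := by
    intro hM
    rw [hmatch] at hM
    push_neg at hM
    obtain ⟨v, hv⟩ := hM
    have h2 : 2 ≤ d v := hv
    rw [hscore, ← hsumR]
    refine Finset.sum_lt_sum (fun i _ => hle_pt i) ⟨v, mem_univ v, ?_⟩
    exact w_lt_n hw0 hw1 hconc hw2 (d v) h2
  refine ⟨hle, ⟨?_, ?_⟩, hstrict⟩
  · intro heq
    by_contra hM
    exact absurd heq (ne_of_lt (hstrict hM))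
  · intro hM
    rw [hmatch] at hM
    rw [hscore, ← hsumR]
    refine Finset.sum_congr rfl fun v _ => ?_
    rcases Nat.le_one_iff_eq_zero_or_eq_one.mp (hM v) with h | h <;> rw [h] <;>
      simp [hw0, hw1]
end

section
/- Let G be a finite simple graph, let w : ℕ → ℝ be 1-concave with w(2) < 2, and let k ≥ 1. Let E = E(G) be the edge election of G and let E_p be E with one additional candidate p and two additional voters each approving only p. Then: (i) the committees in Greedy_w(E_p, k) that do not contain p are exactly the size-k matchings of G; (ii) the committees in Greedy_w(E_p, k) that contain p are exactly the sets M ∪ {p} with M ∈ Greedy_w(E, k−1); consequently (iii) |Greedy_w(E_p, k)| equals the number of size-k matchings of G plus |Greedy_w(E, k−1)|. -/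
open Finset

/-- Greedy `w`-sequences: lists of distinct candidates in which each candidate maximizes
the marginal `w`-score with respect to the set of earlier candidates. -/
inductive GreedySeq {C V : Type} [DecidableEq C] [Fintype V]
    (w : ℕ → ℝ) (A : V → Finset C) : List C → Prop
  | nil : GreedySeq w A []
  | snoc (l : List C) (c : C) :
      GreedySeq w A l → c ∉ l →
      (∀ c' : C, c' ∉ l →
        wScore w A (insert c' l.toFinset) - wScore w A l.toFinset ≤
          wScore w A (insert c l.toFinset) - wScore w A l.toFinset) →
      GreedySeq w A (l ++ [c])

/-- The greedy `w`-Thiele rule with parallel-universes tie-breaking: all committees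
arising from greedy `w`-sequences of length `k`. -/
def GreedyRule {C V : Type} [DecidableEq C] [Fintype V]
    (w : ℕ → ℝ) (A : V → Finset C) (k : ℕ) : Set (Finset C) :=
  {S | ∃ l : List C, GreedySeq w A l ∧ l.length = k ∧ l.toFinset = S}

/-- Approval sets of the election `E_p`: the candidates are the edges of `G` together
with one extra candidate `p` (encoded as `none`), the voters are the vertices of `G`
together with two extra voters, each of whom approves only `p`. -/
def edgeApprovalP {α : Type} [Fintype α] [DecidableEq α]
    (G : SimpleGraph α) [DecidableRel G.Adj] :
    α ⊕ Fin 2 → Finset (Option ↥G.edgeFinset)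
  | .inl v => (edgeApproval G v).map Function.Embedding.some
  | .inr _ => {none}

set_option linter.unusedSectionVars false
section Aux

variable {β : Type} [DecidableEq β]

lemma map_inter_card (A : Finset β) (S : Finset (Option β)) :
    ((A.map Function.Embedding.some) ∩ S).card = (A ∩ S.eraseNone).card := by
  rw [← Finset.card_map Function.Embedding.some (s := A ∩ S.eraseNone)]
  congr 1
  ext x
  cases x with
  | none => simp
  | some a => simp [Finset.mem_eraseNone]

lemma eraseNone_insert_some (e : β) (S : Finset (Option β)) :
    (insert (some e) S).eraseNone = insert e S.eraseNone := by
  ext a; simp [Finset.mem_eraseNone]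

lemma eraseNone_insert_none (S : Finset (Option β)) :
    (insert none S).eraseNone = S.eraseNone := by
  ext a; simp [Finset.mem_eraseNone]

lemma eraseNone_map_some' (A : Finset β) :
    (A.map Function.Embedding.some).eraseNone = A := by
  ext a; simp [Finset.mem_eraseNone]

lemma map_eraseNone_of_not_none {S : Finset (Option β)} (h : none ∉ S) :
    S.eraseNone.map Function.Embedding.some = S := by
  ext x
  cases x with
  | none => simpa using fun hx => h hx
  | some a => simp [Finset.mem_eraseNone]

lemma insert_none_map_eraseNone {S : Finset (Option β)} (h : none ∈ S) :
    insert none (S.eraseNone.map Function.Embedding.some) = S := by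
  ext x
  cases x with
  | none => simpa using h
  | some a => simp [Finset.mem_eraseNone]

set_option linter.unusedSectionVars false

section Graph
variable {α : Type} [Fintype α] [DecidableEq α] (G : SimpleGraph α) [DecidableRel G.Adj]
  (w : ℕ → ℝ)

/-- Score decomposition for the augmented election. -/
lemma wScoreP_eq (S : Finset (Option ↥G.edgeFinset)) :
    wScore w (edgeApprovalP G) S
      = wScore w (edgeApproval G) S.eraseNone + 2 * w (({none} ∩ S).card) := by
  unfold wScore
  rw [Fintype.sum_sum_type]
  congr 1
  · apply Finset.sum_congr rfl
    intro v _
    rw [show edgeApprovalP G (Sum.inl v) = (edgeApproval G v).map Function.Embedding.some from rfl,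
      map_inter_card]
  · simp [edgeApprovalP, Fin.sum_univ_two, two_mul]

lemma gainP_none {S : Finset (Option ↥G.edgeFinset)} (h : none ∉ S)
    (hw0 : w 0 = 0) (hw1 : w 1 = 1) :
    wScore w (edgeApprovalP G) (insert none S) - wScore w (edgeApprovalP G) S = 2 := by
  rw [wScoreP_eq, wScoreP_eq, eraseNone_insert_none]
  have h1 : ({none} ∩ insert none S : Finset (Option ↥G.edgeFinset)) = {none} := by
    ext x; simp; rintro rfl; simp
  have h2 : ({none} ∩ S : Finset (Option ↥G.edgeFinset)) = ∅ := by
    ext x; simp; rintro rfl; exact h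
  rw [h1, h2]
  simp [hw0, hw1]

lemma gainP_some (e : ↥G.edgeFinset) (S : Finset (Option ↥G.edgeFinset)) :
    wScore w (edgeApprovalP G) (insert (some e) S) - wScore w (edgeApprovalP G) S
      = wScore w (edgeApproval G) (insert e S.eraseNone)
        - wScore w (edgeApproval G) S.eraseNone := by
  rw [wScoreP_eq, wScoreP_eq, eraseNone_insert_some]
  have h1 : ({none} ∩ insert (some e) S : Finset (Option ↥G.edgeFinset)) = {none} ∩ S := by
    ext x
    simp only [Finset.mem_inter, Finset.mem_singleton, Finset.mem_insert]
    constructor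
    · rintro ⟨rfl, h | h⟩
      · exact absurd h (by simp)
      · exact ⟨rfl, h⟩
    · rintro ⟨rfl, h⟩
      exact ⟨rfl, Or.inr h⟩
  rw [h1]
  ring

lemma delta_mono (hconc : ∀ i : ℕ, 1 ≤ i → w i - w (i - 1) ≥ w (i + 1) - w i)
    {m n : ℕ} (h : m ≤ n) : w (n + 1) - w n ≤ w (m + 1) - w m := by
  induction n, h using Nat.le_induction with
  | base => exact le_refl _
  | succ n hmn ih =>
    refine le_trans ?_ ih
    have := hconc (n + 1) (by omega)
    simpa using this

lemma exists_endpoints (e : ↥G.edgeFinset) : ∃ x y : α, x ≠ y ∧ (e : Sym2 α) = s(x, y) := by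
  obtain ⟨s, hs⟩ := e
  induction s using Sym2.ind with
  | _ x y =>
    refine ⟨x, y, ?_, rfl⟩
    intro h
    have := G.not_isDiag_of_mem_edgeSet (SimpleGraph.mem_edgeFinset.mp hs)
    simp [h] at this

lemma gainE_eq (e : ↥G.edgeFinset) (T : Finset ↥G.edgeFinset) (he : e ∉ T)
    (x y : α) (hxy : x ≠ y) (hE : (e : Sym2 α) = s(x, y)) :
    wScore w (edgeApproval G) (insert e T) - wScore w (edgeApproval G) T
      = (w ((edgeApproval G x ∩ T).card + 1) - w ((edgeApproval G x ∩ T).card))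
      + (w ((edgeApproval G y ∩ T).card + 1) - w ((edgeApproval G y ∩ T).card)) := by
  have key : ∀ v : α, (edgeApproval G v ∩ insert e T).card
      = if v ∈ (e : Sym2 α) then (edgeApproval G v ∩ T).card + 1
        else (edgeApproval G v ∩ T).card := by
    intro v
    by_cases hv : v ∈ (e : Sym2 α)
    · simp only [hv, if_true]
      have hmem : e ∈ edgeApproval G v := by simp [edgeApproval, hv]
      have h2 : edgeApproval G v ∩ insert e T = insert e (edgeApproval G v ∩ T) := by
        ext f; simp only [Finset.mem_inter, Finset.mem_insert]
        constructor
        · rintro ⟨h1, rfl | h3⟩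
          exacts [Or.inl rfl, Or.inr ⟨h1, h3⟩]
        · rintro (rfl | ⟨h1, h3⟩)
          exacts [⟨hmem, Or.inl rfl⟩, ⟨h1, Or.inr h3⟩]
      rw [h2, Finset.card_insert_of_notMem
        (fun hc => he (Finset.mem_of_mem_inter_right hc))]
    · simp only [hv, if_false]
      congr 1
      ext f; simp only [Finset.mem_inter, Finset.mem_insert]
      constructor
      · rintro ⟨h1, rfl | h3⟩
        · exact absurd (by simpa [edgeApproval] using h1) hv
        · exact ⟨h1, h3⟩
      · rintro ⟨h1, h3⟩; exact ⟨h1, Or.inr h3⟩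
  unfold wScore
  rw [← Finset.sum_sub_distrib,
    ← Finset.sum_subset (Finset.subset_univ ({x, y} : Finset α))]
  · rw [Finset.sum_pair hxy, key x, key y, if_pos (by rw [hE]; simp),
      if_pos (by rw [hE]; simp)]
  · intro v _ hv
    rw [key v, if_neg ?_]
    · ring
    · rw [hE]
      intro h
      simp only [Finset.mem_insert, Finset.mem_singleton] at hv
      rcases Sym2.mem_iff.mp h with rfl | rfl <;> tauto

lemma gainE_le_two (hw0 : w 0 = 0) (hw1 : w 1 = 1)
    (hconc : ∀ i : ℕ, 1 ≤ i → w i - w (i - 1) ≥ w (i + 1) - w i)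
    (e : ↥G.edgeFinset) (T : Finset ↥G.edgeFinset) (he : e ∉ T) :
    wScore w (edgeApproval G) (insert e T) - wScore w (edgeApproval G) T ≤ 2 := by
  obtain ⟨x, y, hxy, hE⟩ := exists_endpoints G e
  rw [gainE_eq G w e T he x y hxy hE]
  have h1 := delta_mono w hconc (Nat.zero_le (edgeApproval G x ∩ T).card)
  have h2 := delta_mono w hconc (Nat.zero_le (edgeApproval G y ∩ T).card)
  rw [hw0, hw1] at h1 h2
  linarith

lemma gainE_free (hw0 : w 0 = 0) (hw1 : w 1 = 1)
    (e : ↥G.edgeFinset) (T : Finset ↥G.edgeFinset) (he : e ∉ T)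
    (hfree : ∀ f ∈ T, ∀ z : α, z ∈ (e : Sym2 α) → z ∉ (f : Sym2 α)) :
    wScore w (edgeApproval G) (insert e T) - wScore w (edgeApproval G) T = 2 := by
  obtain ⟨x, y, hxy, hE⟩ := exists_endpoints G e
  rw [gainE_eq G w e T he x y hxy hE]
  have hz : ∀ z : α, z ∈ (e : Sym2 α) → edgeApproval G z ∩ T = ∅ := by
    intro z hzE
    ext f
    simp only [Finset.mem_inter, Finset.notMem_empty, iff_false, not_and, edgeApproval,
      Finset.mem_filter, Finset.mem_univ, true_and]
    intro hzf hfT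
    exact hfree f hfT z hzE hzf
  rw [hz x (by rw [hE]; simp), hz y (by rw [hE]; simp)]
  simp [hw0, hw1]
  norm_num

lemma gainE_conflict (hw0 : w 0 = 0) (hw1 : w 1 = 1)
    (hconc : ∀ i : ℕ, 1 ≤ i → w i - w (i - 1) ≥ w (i + 1) - w i)
    (hw2 : w 2 < 2)
    (e : ↥G.edgeFinset) (T : Finset ↥G.edgeFinset) (he : e ∉ T)
    (hge : 2 ≤ wScore w (edgeApproval G) (insert e T) - wScore w (edgeApproval G) T) :
    ∀ f ∈ T, ∀ z : α, z ∈ (e : Sym2 α) → z ∉ (f : Sym2 α) := by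
  by_contra hcon
  push_neg at hcon
  obtain ⟨f, hfT, z, hzE, hzF⟩ := hcon
  obtain ⟨x, y, hxy, hE⟩ := exists_endpoints G e
  rw [gainE_eq G w e T he x y hxy hE] at hge
  have hd : 1 ≤ (edgeApproval G z ∩ T).card := by
    refine Finset.card_pos.mpr ⟨f, ?_⟩
    simp [edgeApproval, hzF, hfT]
  have hdz := delta_mono w hconc hd
  have hupx := delta_mono w hconc (Nat.zero_le (edgeApproval G x ∩ T).card)
  have hupy := delta_mono w hconc (Nat.zero_le (edgeApproval G y ∩ T).card)
  rw [hw0, hw1] at hupx hupy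
  rw [hw1] at hdz
  norm_num at hdz
  rw [hE] at hzE
  rcases Sym2.mem_iff.mp hzE with rfl | rfl
  · linarith
  · linarith

lemma greedySeq_nodup {C V : Type} [DecidableEq C] [Fintype V] {w : ℕ → ℝ} {A : V → Finset C}
    {l : List C} (h : GreedySeq w A l) : l.Nodup := by
  induction h with
  | nil => exact List.nodup_nil
  | snoc l c _ hc _ ih =>
    simp [List.nodup_append, ih, hc]
    rintro a ha rfl; exact hc ha

lemma reduceOption_toFinset' {β : Type} [DecidableEq β] (l : List (Option β)) :
    l.reduceOption.toFinset = l.toFinset.eraseNone := by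
  ext a; simp [Finset.mem_eraseNone, List.reduceOption_mem_iff]

lemma greedy_reduce (hw0 : w 0 = 0) (hw1 : w 1 = 1)
    (hconc : ∀ i : ℕ, 1 ≤ i → w i - w (i - 1) ≥ w (i + 1) - w i)
    {l : List (Option ↥G.edgeFinset)}
    (h : GreedySeq w (edgeApprovalP G) l) :
    GreedySeq w (edgeApproval G) l.reduceOption := by
  induction h with
  | nil => exact GreedySeq.nil
  | snoc l c hl hc hmax ih =>
    cases c with
    | none => simpa [List.reduceOption_append, List.reduceOption] using ih
    | some e =>
      have hre : (l ++ [some e]).reduceOption = l.reduceOption ++ [e] := by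
        simp [List.reduceOption_append, List.reduceOption]
      rw [hre]
      refine GreedySeq.snoc _ e ih (fun hmem => hc (List.reduceOption_mem_iff.mp hmem)) ?_
      intro e' he'
      rw [reduceOption_toFinset']
      have hEe' : e' ∉ l.toFinset.eraseNone := by
        rw [← reduceOption_toFinset']
        simpa using he'
      have hEe : e ∉ l.toFinset.eraseNone := by
        simp only [Finset.mem_eraseNone, List.mem_toFinset]
        exact hc
      by_cases hn : none ∈ l
      · have h2 := hmax (some e')
          (fun hmem => he' (List.reduceOption_mem_iff.mpr hmem))
        rwa [gainP_some, gainP_some] at h2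
      · have h2 := hmax none hn
        rw [gainP_none G w (by simpa using hn) hw0 hw1, gainP_some] at h2
        exact le_trans (gainE_le_two G w hw0 hw1 hconc e' _ hEe') h2

lemma greedy_matching (hw0 : w 0 = 0) (hw1 : w 1 = 1)
    (hconc : ∀ i : ℕ, 1 ≤ i → w i - w (i - 1) ≥ w (i + 1) - w i)
    (hw2 : w 2 < 2) {l : List (Option ↥G.edgeFinset)}
    (h : GreedySeq w (edgeApprovalP G) l) (hn : none ∉ l) :
    IsMatchingFinset G (l.toFinset.eraseNone) := by
  induction h with
  | nil => intro e he; simp [Finset.mem_eraseNone] at he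
  | snoc l c hl hc hmax ih =>
    have hn' : none ∉ l := fun hmem => hn (by simp [hmem])
    cases c with
    | none => exact absurd (by simp) hn
    | some e =>
      have hEe : e ∉ l.toFinset.eraseNone := by
        simp only [Finset.mem_eraseNone, List.mem_toFinset]
        exact hc
      have h2 := hmax none hn'
      rw [gainP_none G w (by simpa using hn') hw0 hw1, gainP_some] at h2
      have hfree := gainE_conflict G w hw0 hw1 hconc hw2 e _ hEe h2
      have hset : (l ++ [some e]).toFinset.eraseNone = insert e (l.toFinset.eraseNone) := by
        ext a
        simp only [Finset.mem_eraseNone, List.mem_toFinset, List.mem_append,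
          List.mem_singleton, Finset.mem_insert, Option.some_inj]
        tauto
      rw [hset]
      intro f1 h1 f2 h2' hne z hz1
      rcases Finset.mem_insert.mp h1 with rfl | hm1
      · rcases Finset.mem_insert.mp h2' with rfl | hm2
        · exact absurd rfl hne
        · exact hfree f2 hm2 z hz1
      · rcases Finset.mem_insert.mp h2' with rfl | hm2
        · exact fun hz2 => hfree f1 hm1 z hz2 hz1
        · exact ih hn' f1 hm1 f2 hm2 hne z hz1

lemma matching_greedy (hw0 : w 0 = 0) (hw1 : w 1 = 1)
    (hconc : ∀ i : ℕ, 1 ≤ i → w i - w (i - 1) ≥ w (i + 1) - w i)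
    (m : List ↥G.edgeFinset) (hnd : m.Nodup)
    (hm : IsMatchingFinset G m.toFinset) :
    GreedySeq w (edgeApprovalP G) (m.map some) := by
  induction m using List.reverseRecOn with
  | nil => exact GreedySeq.nil
  | append_singleton m e ih =>
    simp only [List.nodup_append, List.nodup_singleton, List.disjoint_singleton] at hnd
    obtain ⟨hnd', -, hem⟩ := hnd
    replace hem : e ∉ m := fun h => hem e h e (by simp) rfl
    have hm' : IsMatchingFinset G m.toFinset := by
      intro f1 h1 f2 h2 hne z hz
      exact hm f1 (by simp at h1 ⊢; tauto) f2 (by simp at h2 ⊢; tauto) hne z hz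
    rw [List.map_append]
    refine GreedySeq.snoc _ (some e) (ih hnd' hm') (by simpa using hem) ?_
    have hS : (m.map some).toFinset.eraseNone = m.toFinset := by
      ext a; simp [Finset.mem_eraseNone]
    have hEe : e ∉ m.toFinset := by simpa using hem
    have hgaine : wScore w (edgeApprovalP G) (insert (some e) (m.map some).toFinset)
        - wScore w (edgeApprovalP G) (m.map some).toFinset = 2 := by
      rw [gainP_some, hS]
      refine gainE_free G w hw0 hw1 e _ hEe ?_
      intro f hf z hz
      refine hm e (by simp) f (by simp at hf ⊢; tauto) ?_ z hz
      rintro rfl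
      exact hem (by simpa using hf)
    intro c' hc'
    rw [hgaine]
    cases c' with
    | none =>
      rw [gainP_none G w (by simp) hw0 hw1]
    | some e' =>
      rw [gainP_some, hS]
      exact gainE_le_two G w hw0 hw1 hconc e' _ (by simpa using (fun h => hc' (by simpa using h) : e' ∉ m))

lemma greedy_lift (hw0 : w 0 = 0) (hw1 : w 1 = 1)
    (hconc : ∀ i : ℕ, 1 ≤ i → w i - w (i - 1) ≥ w (i + 1) - w i)
    {m : List ↥G.edgeFinset}
    (h : GreedySeq w (edgeApproval G) m) :
    GreedySeq w (edgeApprovalP G) (none :: m.map some) := by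
  induction h with
  | nil =>
    have heq : (none :: (([] : List ↥G.edgeFinset).map some))
        = ([] : List (Option ↥G.edgeFinset)) ++ [none] := rfl
    rw [heq]
    refine GreedySeq.snoc [] none GreedySeq.nil (by simp) ?_
    intro c' _
    cases c' with
    | none => exact le_refl _
    | some e' =>
      rw [gainP_none G w (by simp) hw0 hw1, gainP_some]
      refine le_trans (le_of_eq rfl) ?_
      have hemp : (([] : List (Option ↥G.edgeFinset)).toFinset).eraseNone = ∅ := by
        ext a; simp [Finset.mem_eraseNone]
      rw [hemp] at *
      exact gainE_le_two G w hw0 hw1 hconc e' ∅ (by simp)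
  | snoc m e hm he hmax ih =>
    have heq : none :: (m ++ [e]).map some = (none :: m.map some) ++ [some e] := by simp
    rw [heq]
    refine GreedySeq.snoc _ (some e) ih (by simpa using he) ?_
    have hS : (none :: m.map some).toFinset.eraseNone = m.toFinset := by
      ext a; simp [Finset.mem_eraseNone]
    intro c' hc'
    cases c' with
    | none => exact absurd (by simp) hc'
    | some e' =>
      have he' : e' ∉ m := fun hmem => hc' (by simp [hmem])
      have := hmax e' he'
      rw [gainP_some, gainP_some, hS]
      exact this

end Graph
end Aux

theorem stmt11 {α : Type} [Fintype α] [DecidableEq α]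
    (G : SimpleGraph α) [DecidableRel G.Adj]
    (w : ℕ → ℝ) (hw0 : w 0 = 0) (hw1 : w 1 = 1) (hmono : Monotone w)
    (hconc : ∀ i : ℕ, 1 ≤ i → w i - w (i - 1) ≥ w (i + 1) - w i)
    (hw2 : w 2 < 2) (k : ℕ) (hk : 1 ≤ k) :
    (∀ S : Finset (Option ↥G.edgeFinset),
      (S ∈ GreedyRule w (edgeApprovalP G) k ∧ none ∉ S) ↔
        (∃ M : Finset ↥G.edgeFinset, M.card = k ∧ IsMatchingFinset G M ∧
          S = M.map Function.Embedding.some))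
    ∧ (∀ S : Finset (Option ↥G.edgeFinset),
        (S ∈ GreedyRule w (edgeApprovalP G) k ∧ none ∈ S) ↔
          (∃ M ∈ GreedyRule w (edgeApproval G) (k - 1),
            S = insert none (M.map Function.Embedding.some)))
    ∧ Nat.card ↥(GreedyRule w (edgeApprovalP G) k)
        = Nat.card {M : Finset ↥G.edgeFinset // M.card = k ∧ IsMatchingFinset G M}
          + Nat.card ↥(GreedyRule w (edgeApproval G) (k - 1)) := by
  classical
  have part1 : ∀ S : Finset (Option ↥G.edgeFinset),
      (S ∈ GreedyRule w (edgeApprovalP G) k ∧ none ∉ S) ↔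
        (∃ M : Finset ↥G.edgeFinset, M.card = k ∧ IsMatchingFinset G M ∧
          S = M.map Function.Embedding.some) := by
    intro S
    constructor
    · rintro ⟨⟨l, hl, hlen, rfl⟩, hnS⟩
      have hnl : none ∉ l := fun h => hnS (List.mem_toFinset.mpr h)
      refine ⟨l.toFinset.eraseNone, ?_, greedy_matching G w hw0 hw1 hconc hw2 hl hnl, ?_⟩
      · have hcard : l.toFinset.card = k := by
          rw [List.toFinset_card_of_nodup (greedySeq_nodup hl), hlen]
        have hmap := map_eraseNone_of_not_none hnS
        calc (l.toFinset.eraseNone).card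
            = ((l.toFinset.eraseNone).map Function.Embedding.some).card :=
              (Finset.card_map _).symm
          _ = l.toFinset.card := by rw [hmap]
          _ = k := hcard
      · exact (map_eraseNone_of_not_none hnS).symm
    · rintro ⟨M, hcard, hmatch, rfl⟩
      refine ⟨⟨M.toList.map some, ?_, ?_, ?_⟩, ?_⟩
      · exact matching_greedy G w hw0 hw1 hconc M.toList M.nodup_toList
          (by rwa [Finset.toList_toFinset])
      · simp [hcard]
      · ext x
        cases x with
        | none => simp
        | some a => simp
      · simp
  have part2 : ∀ S : Finset (Option ↥G.edgeFinset),
      (S ∈ GreedyRule w (edgeApprovalP G) k ∧ none ∈ S) ↔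
        (∃ M ∈ GreedyRule w (edgeApproval G) (k - 1),
          S = insert none (M.map Function.Embedding.some)) := by
    intro S
    constructor
    · rintro ⟨⟨l, hl, hlen, rfl⟩, hnS⟩
      refine ⟨l.toFinset.eraseNone,
        ⟨l.reduceOption, greedy_reduce G w hw0 hw1 hconc hl, ?_, reduceOption_toFinset' l⟩,
        (insert_none_map_eraseNone hnS).symm⟩
      have hnd' := greedySeq_nodup (greedy_reduce G w hw0 hw1 hconc hl)
      have h1 : l.reduceOption.length = l.toFinset.eraseNone.card := by
        rw [← reduceOption_toFinset', List.toFinset_card_of_nodup hnd']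
      have h2 : l.toFinset = insert none ((l.toFinset.eraseNone).map Function.Embedding.some) :=
        (insert_none_map_eraseNone hnS).symm
      have h3 : l.toFinset.card = (l.toFinset.eraseNone).card + 1 := by
        conv_lhs => rw [h2]
        rw [Finset.card_insert_of_notMem (by simp), Finset.card_map]
      have h4 : l.toFinset.card = k := by
        rw [List.toFinset_card_of_nodup (greedySeq_nodup hl), hlen]
      omega
    · rintro ⟨M, ⟨m, hm, hmlen, rfl⟩, rfl⟩
      refine ⟨⟨none :: m.map some, greedy_lift G w hw0 hw1 hconc hm, ?_, ?_⟩, by simp⟩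
      · simp only [List.length_cons, List.length_map, hmlen]
        omega
      · ext x
        cases x with
        | none => simp
        | some a => simp
  refine ⟨part1, part2, ?_⟩
  have hinj1 : Function.Injective
      (fun M : Finset ↥G.edgeFinset => M.map Function.Embedding.some) :=
    Finset.map_injective _
  have hinj2 : Function.Injective
      (fun M : Finset ↥G.edgeFinset => insert none (M.map Function.Embedding.some)) := by
    intro M M' h
    have := congrArg Finset.eraseNone h
    simpa [eraseNone_insert_none, eraseNone_map_some'] using this
  have hsplit : GreedyRule w (edgeApprovalP G) k
      = ((fun M : Finset ↥G.edgeFinset => M.map Function.Embedding.some)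
          '' {M | M.card = k ∧ IsMatchingFinset G M})
        ∪ ((fun M : Finset ↥G.edgeFinset => insert none (M.map Function.Embedding.some))
          '' GreedyRule w (edgeApproval G) (k - 1)) := by
    ext S
    constructor
    · intro hS
      by_cases hn : none ∈ S
      · right
        obtain ⟨M, hM, rfl⟩ := (part2 S).mp ⟨hS, hn⟩
        exact ⟨M, hM, rfl⟩
      · left
        obtain ⟨M, hc, hmt, rfl⟩ := (part1 S).mp ⟨hS, hn⟩
        exact ⟨M, ⟨hc, hmt⟩, rfl⟩
    · rintro (⟨M, ⟨hc, hmt⟩, rfl⟩ | ⟨M, hM, rfl⟩)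
      · exact ((part1 _).mpr ⟨M, hc, hmt, rfl⟩).1
      · exact ((part2 _).mpr ⟨M, hM, rfl⟩).1
  have hdisj : Disjoint
      ((fun M : Finset ↥G.edgeFinset => M.map Function.Embedding.some)
        '' {M | M.card = k ∧ IsMatchingFinset G M})
      ((fun M : Finset ↥G.edgeFinset => insert none (M.map Function.Embedding.some))
        '' GreedyRule w (edgeApproval G) (k - 1)) := by
    rw [Set.disjoint_left]
    rintro S ⟨M, -, rfl⟩ ⟨M', -, hS⟩
    have h1 : none ∉ M.map Function.Embedding.some := by simp
    have hS' : insert none (M'.map Function.Embedding.some) = M.map Function.Embedding.some := hS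
    have h2 : none ∈ insert none (M'.map Function.Embedding.some) := by simp
    rw [hS'] at h2
    exact h1 h2
  have c0 : Nat.card ↥(GreedyRule w (edgeApprovalP G) k)
      = (GreedyRule w (edgeApprovalP G) k).ncard := Nat.card_coe_set_eq _
  have c1 : Nat.card {M : Finset ↥G.edgeFinset // M.card = k ∧ IsMatchingFinset G M}
      = ({M : Finset ↥G.edgeFinset | M.card = k ∧ IsMatchingFinset G M}).ncard :=
    Nat.card_coe_set_eq _
  have c2 : Nat.card ↥(GreedyRule w (edgeApproval G) (k - 1))
      = (GreedyRule w (edgeApproval G) (k - 1)).ncard := Nat.card_coe_set_eq _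
  rw [c0, c1, c2, hsplit, Set.ncard_union_eq hdisj (Set.toFinite _) (Set.toFinite _)]
  congr 1
  · exact Set.ncard_image_of_injective _ hinj1
  · exact Set.ncard_image_of_injective _ hinj2
end

section
/- Let G be a finite simple graph, k ≥ 1, and let E = E(G) be the edge election of G and E_p be E with one additional candidate p and two additional voters each approving only p. Then: (i) the committees in Phragmén(E_p, k) that do not contain p are exactly the size-k matchings of G; (ii) the committees in Phragmén(E_p, k) that contain p are exactly the sets M ∪ {p} with M ∈ Phragmén(E, k−1); consequently (iii) |Phragmén(E_p, k)| equals the number of size-k matchings of G plus |Phragmén(E, k−1)|. -/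
open Finset

/-- The voters approving candidate `c`. -/
def approvers {C V : Type} [DecidableEq C] [Fintype V]
    (A : V → Finset C) (c : C) : Finset V :=
  Finset.univ.filter (fun v => c ∈ A v)

/-- Given current budgets `b`, the amount of time needed until the voters approving `c`
jointly hold one unit of currency (each voter earns money at a constant unit rate). -/
noncomputable def phCost {C V : Type} [DecidableEq C] [Fintype V]
    (A : V → Finset C) (b : V → ℝ) (c : C) : ℝ :=
  max 0 ((1 - ∑ v ∈ approvers A c, b v) / (approvers A c).card)

/-- Reachable states of the Phragmén sequential process started from committee `S₀` and
budgets `b₀`: repeatedly, a not-yet-selected candidate whose supporters can afford it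
soonest is bought (ties resolved arbitrarily — parallel universes); its supporters'
budgets reset to `0` while all other voters keep earning until the purchase moment. -/
inductive PhragReach {C V : Type} [DecidableEq C] [Fintype V]
    (A : V → Finset C) (S₀ : Finset C) (b₀ : V → ℝ) : Finset C → (V → ℝ) → Prop
  | init : PhragReach A S₀ b₀ S₀ b₀
  | step (S : Finset C) (b : V → ℝ) (c : C) :
      PhragReach A S₀ b₀ S b → c ∉ S → (approvers A c).Nonempty →
      (∀ c' : C, c' ∉ S → (approvers A c').Nonempty → phCost A b c ≤ phCost A b c') →
      PhragReach A S₀ b₀ (insert c S)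
        (fun v => if c ∈ A v then 0 else b v + phCost A b c)

/-- The size-`k` committees selected by the Phragmén rule (parallel-universes
tie-breaking), starting from the empty committee and zero budgets. -/
def Phragmen {C V : Type} [DecidableEq C] [Fintype V]
    (A : V → Finset C) (k : ℕ) : Set (Finset C) :=
  {S | ∃ b : V → ℝ, PhragReach A ∅ (fun _ => 0) S b ∧ S.card = k}

section Basic
variable {α : Type} [Fintype α] [DecidableEq α] (G : SimpleGraph α) [DecidableRel G.Adj]

lemma mem_edgeApproval {v : α} {e : ↥G.edgeFinset} :
    e ∈ edgeApproval G v ↔ v ∈ (e : Sym2 α) := by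
  simp [edgeApproval]

lemma approvers_some (e : ↥G.edgeFinset) :
    approvers (edgeApprovalP G) (some e)
      = (approvers (edgeApproval G) e).map ⟨Sum.inl, Sum.inl_injective⟩ := by
  ext v
  rcases v with v | i
  · simp only [approvers, Finset.mem_filter, Finset.mem_univ, true_and, Finset.mem_map, Finset.mem_insert, Finset.mem_singleton]; simp [edgeApprovalP]
  · simp only [approvers, Finset.mem_filter, Finset.mem_univ, true_and, Finset.mem_map, Finset.mem_insert, Finset.mem_singleton]; simp [edgeApprovalP]

lemma approvers_none :
    approvers (edgeApprovalP G) (none : Option ↥G.edgeFinset)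
      = {Sum.inr 0, Sum.inr 1} := by
  ext v
  rcases v with v | i
  · simp only [approvers, Finset.mem_filter, Finset.mem_univ, true_and, Finset.mem_map, Finset.mem_insert, Finset.mem_singleton]; simp [edgeApprovalP]
  · simp only [approvers, Finset.mem_filter, Finset.mem_univ, true_and, Finset.mem_insert, Finset.mem_singleton, Sum.inr.injEq]; simp [edgeApprovalP]; omega

lemma exists_endpoints_s14 (e : ↥G.edgeFinset) :
    ∃ a b : α, a ≠ b ∧ approvers (edgeApproval G) e = {a, b}
      ∧ (∀ x : α, x ∈ (e : Sym2 α) ↔ x = a ∨ x = b) := by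
  obtain ⟨e, he⟩ := e
  induction e with
  | _ a b =>
    refine ⟨a, b, ?_, ?_, ?_⟩
    · intro h; subst h
      exact G.irrefl ((SimpleGraph.mem_edgeFinset).mp he)
    · ext v
      simp [approvers, mem_edgeApproval, Sym2.mem_iff, or_comm]
    · intro x; simp [Sym2.mem_iff]

lemma card_approvers₀ (e : ↥G.edgeFinset) :
    (approvers (edgeApproval G) e).card = 2 := by
  obtain ⟨a, b, hab, happ, -⟩ := exists_endpoints_s14 G e
  rw [happ, card_insert_of_notMem (by simpa using hab), card_singleton]

lemma approvers₀_nonempty (e : ↥G.edgeFinset) :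
    (approvers (edgeApproval G) e).Nonempty := by
  rw [← card_pos, card_approvers₀]; norm_num

lemma card_approversP (c : Option ↥G.edgeFinset) :
    (approvers (edgeApprovalP G) c).card = 2 := by
  cases c with
  | none => rw [approvers_none]; simp
  | some e => rw [approvers_some, card_map, card_approvers₀]

lemma approversP_nonempty (c : Option ↥G.edgeFinset) :
    (approvers (edgeApprovalP G) c).Nonempty := by
  rw [← card_pos, card_approversP]; norm_num

lemma sum_approvers_some (e : ↥G.edgeFinset) (b : α ⊕ Fin 2 → ℝ) :
    ∑ v ∈ approvers (edgeApprovalP G) (some e), b v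
      = ∑ v ∈ approvers (edgeApproval G) e, b (Sum.inl v) := by
  rw [approvers_some, Finset.sum_map]; rfl

lemma phCost_nonneg {C V : Type} [DecidableEq C] [Fintype V]
    (A : V → Finset C) (b : V → ℝ) (c : C) : 0 ≤ phCost A b c :=
  le_max_left _ _

lemma phCost_some (b : α ⊕ Fin 2 → ℝ) (e : ↥G.edgeFinset) :
    phCost (edgeApprovalP G) b (some e) = phCost (edgeApproval G) (fun v => b (Sum.inl v)) e := by
  unfold phCost
  rw [sum_approvers_some, approvers_some, card_map]

lemma phCost_congr {C V : Type} [DecidableEq C] [Fintype V]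
    (A : V → Finset C) (b b' : V → ℝ) (c : C) (h : ∀ v ∈ approvers A c, b v = b' v) :
    phCost A b c = phCost A b' c := by
  unfold phCost
  rw [Finset.sum_congr rfl h]

lemma phCost_of_card_two {C V : Type} [DecidableEq C] [Fintype V]
    (A : V → Finset C) (b : V → ℝ) (c : C) (h : (approvers A c).card = 2) :
    phCost A b c = max 0 ((1 - ∑ v ∈ approvers A c, b v) / 2) := by
  unfold phCost; rw [h]; norm_num

end Basic
section Runs
variable {α : Type} [Fintype α] [DecidableEq α] (G : SimpleGraph α) [DecidableRel G.Adj]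

lemma mem_edgeApprovalP_inl {v : α} {e : ↥G.edgeFinset} :
    some e ∈ edgeApprovalP G (Sum.inl v) ↔ v ∈ (e : Sym2 α) := by
  simp [edgeApprovalP, mem_edgeApproval]

lemma some_not_mem_inr {e : ↥G.edgeFinset} (i : Fin 2) :
    some e ∉ edgeApprovalP G (Sum.inr i) := by
  simp [edgeApprovalP]

lemma none_not_mem_inl (v : α) :
    (none : Option ↥G.edgeFinset) ∉ edgeApprovalP G (Sum.inl v) := by
  simp [edgeApprovalP]

lemma none_mem_inr (i : Fin 2) :
    (none : Option ↥G.edgeFinset) ∈ edgeApprovalP G (Sum.inr i) := by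
  simp [edgeApprovalP]

/-- Budgets in the edge election after a matching `M` has been bought. -/
noncomputable def bME (M : Finset ↥G.edgeFinset) : α → ℝ :=
  fun v => if ∃ e ∈ M, v ∈ (e : Sym2 α) then 0 else 1/2

/-- Budgets in the election `E_p` after a matching `M` has been bought (and not `p`). -/
noncomputable def bMP (M : Finset ↥G.edgeFinset) : α ⊕ Fin 2 → ℝ :=
  fun x => match x with
  | .inl v => bME G M v
  | .inr _ => 1/2

lemma matching_subset {M M' : Finset ↥G.edgeFinset} (h : M' ⊆ M)
    (hM : IsMatchingFinset G M) : IsMatchingFinset G M' :=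
  fun e he f hf hef x hx => hM e (h he) f (h hf) hef x hx

lemma phCost_zero_budget₀ (c : ↥G.edgeFinset) :
    phCost (edgeApproval G) (fun _ => 0) c = 1/2 := by
  rw [phCost_of_card_two _ _ _ (card_approvers₀ G c)]
  norm_num

lemma phCost_zero_budgetP (c : Option ↥G.edgeFinset) :
    phCost (edgeApprovalP G) (fun _ => 0) c = 1/2 := by
  rw [phCost_of_card_two _ _ _ (card_approversP G c)]
  norm_num

lemma sum_bME_of_free (M : Finset ↥G.edgeFinset) (e : ↥G.edgeFinset)
    (h : ∀ x ∈ (e : Sym2 α), ∀ f ∈ M, x ∉ (f : Sym2 α)) :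
    ∑ v ∈ approvers (edgeApproval G) e, bME G M v = 1 := by
  obtain ⟨a, b, hab, happ, hmem⟩ := exists_endpoints_s14 G e
  rw [happ, Finset.sum_insert (by simpa using hab), Finset.sum_singleton]
  have ha : bME G M a = 1/2 := by
    unfold bME
    rw [if_neg]
    push_neg
    exact fun f hf => h a ((hmem a).mpr (Or.inl rfl)) f hf
  have hb : bME G M b = 1/2 := by
    unfold bME
    rw [if_neg]
    push_neg
    exact fun f hf => h b ((hmem b).mpr (Or.inr rfl)) f hf
  rw [ha, hb]; norm_num

lemma phCost_bME_of_free (M : Finset ↥G.edgeFinset) (e : ↥G.edgeFinset)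
    (h : ∀ x ∈ (e : Sym2 α), ∀ f ∈ M, x ∉ (f : Sym2 α)) :
    phCost (edgeApproval G) (bME G M) e = 0 := by
  rw [phCost_of_card_two _ _ _ (card_approvers₀ G e), sum_bME_of_free G M e h]
  norm_num

lemma free_of_matching_insert {M : Finset ↥G.edgeFinset} {e : ↥G.edgeFinset}
    (he : e ∉ M) (hM : IsMatchingFinset G (insert e M)) :
    ∀ x ∈ (e : Sym2 α), ∀ f ∈ M, x ∉ (f : Sym2 α) := by
  intro x hx f hf
  exact hM e (mem_insert_self e M) f (mem_insert_of_mem hf)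
    (fun hef => he (hef ▸ hf)) x hx

lemma bME_insert (M : Finset ↥G.edgeFinset) (e : ↥G.edgeFinset) (v : α) :
    bME G (insert e M) v = if v ∈ (e : Sym2 α) then 0 else bME G M v := by
  unfold bME
  by_cases hv : v ∈ (e : Sym2 α)
  · rw [if_pos hv, if_pos ⟨e, mem_insert_self e M, hv⟩]
  · rw [if_neg hv]
    by_cases hc : ∃ f ∈ M, v ∈ (f : Sym2 α)
    · obtain ⟨f, hf, hvf⟩ := hc
      rw [if_pos ⟨f, mem_insert_of_mem hf, hvf⟩, if_pos ⟨f, hf, hvf⟩]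
    · rw [if_neg, if_neg hc]
      rintro ⟨f, hf, hvf⟩
      rcases mem_insert.mp hf with rfl | hf'
      · exact hv hvf
      · exact hc ⟨f, hf', hvf⟩

lemma bME_empty (v : α) : bME G ∅ v = 1/2 := by simp [bME]

lemma bME_singleton (e : ↥G.edgeFinset) (v : α) :
    bME G {e} v = if v ∈ (e : Sym2 α) then 0 else 1/2 := by
  unfold bME; simp

/-- A nonempty matching is reachable in the edge election. -/
lemma run_matching_E (M : Finset ↥G.edgeFinset) (hne : M.Nonempty)
    (hM : IsMatchingFinset G M) :
    PhragReach (edgeApproval G) ∅ (fun _ => 0) M (bME G M) := by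
  induction M using Finset.induction_on with
  | empty => exact absurd hne (by simp)
  | @insert e M he ih =>
    rcases M.eq_empty_or_nonempty with rfl | hMne
    · have hstep := PhragReach.step (A := edgeApproval G) (S₀ := ∅) (b₀ := fun _ => 0)
        ∅ (fun _ => 0) e PhragReach.init (by simp) (approvers₀_nonempty G e)
        (fun c' _ _ => by rw [phCost_zero_budget₀, phCost_zero_budget₀])
      have hbud : bME G (insert e ∅)
          = fun v => if e ∈ edgeApproval G v then 0
              else (fun _ => (0:ℝ)) v + phCost (edgeApproval G) (fun _ => 0) e := by
        funext v
        rw [bME_insert, phCost_zero_budget₀]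
        by_cases hv : v ∈ (e : Sym2 α)
        · rw [if_pos hv, if_pos ((mem_edgeApproval G).mpr hv)]
        · rw [if_neg hv, if_neg (fun h => hv ((mem_edgeApproval G).mp h)), bME_empty]
          norm_num
      rw [hbud]
      exact hstep
    · have ih' := ih hMne (matching_subset G (subset_insert e M) hM)
      have hfree := free_of_matching_insert G he hM
      have hc0 := phCost_bME_of_free G M e hfree
      have hstep := PhragReach.step (A := edgeApproval G) (S₀ := ∅) (b₀ := fun _ => 0)
        M (bME G M) e ih' he (approvers₀_nonempty G e)
        (fun c' _ _ => by rw [hc0]; exact phCost_nonneg _ _ _)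
      have hbud : bME G (insert e M)
          = fun v => if e ∈ edgeApproval G v then 0
              else bME G M v + phCost (edgeApproval G) (bME G M) e := by
        funext v
        rw [bME_insert, hc0, add_zero]
        by_cases hv : v ∈ (e : Sym2 α)
        · rw [if_pos hv, if_pos ((mem_edgeApproval G).mpr hv)]
        · rw [if_neg hv, if_neg (fun h => hv ((mem_edgeApproval G).mp h))]
      rw [hbud]
      exact hstep

lemma sum_bMP_some (M : Finset ↥G.edgeFinset) (e : ↥G.edgeFinset)
    (h : ∀ x ∈ (e : Sym2 α), ∀ f ∈ M, x ∉ (f : Sym2 α)) :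
    ∑ v ∈ approvers (edgeApprovalP G) (some e), bMP G M v = 1 := by
  rw [sum_approvers_some]
  exact sum_bME_of_free G M e h

lemma phCost_bMP_some_of_free (M : Finset ↥G.edgeFinset) (e : ↥G.edgeFinset)
    (h : ∀ x ∈ (e : Sym2 α), ∀ f ∈ M, x ∉ (f : Sym2 α)) :
    phCost (edgeApprovalP G) (bMP G M) (some e) = 0 := by
  rw [phCost_some]
  exact phCost_bME_of_free G M e h

lemma phCost_bMP_none (M : Finset ↥G.edgeFinset) :
    phCost (edgeApprovalP G) (bMP G M) (none : Option ↥G.edgeFinset) = 0 := by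
  rw [phCost_of_card_two _ _ _ (card_approversP G none), approvers_none]
  rw [Finset.sum_insert (by simp), Finset.sum_singleton]
  show max 0 ((1 - ((1:ℝ)/2 + 1/2))/2) = 0
  norm_num

/-- A nonempty matching (without `p`) is reachable in `E_p`. -/
lemma run_matching_P (M : Finset ↥G.edgeFinset) (hne : M.Nonempty)
    (hM : IsMatchingFinset G M) :
    PhragReach (edgeApprovalP G) ∅ (fun _ => 0)
      (M.map Function.Embedding.some) (bMP G M) := by
  induction M using Finset.induction_on with
  | empty => exact absurd hne (by simp)
  | @insert e M he ih =>
    rcases M.eq_empty_or_nonempty with rfl | hMne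
    · have hstep := PhragReach.step (A := edgeApprovalP G) (S₀ := ∅) (b₀ := fun _ => 0)
        ∅ (fun _ => 0) (some e) PhragReach.init (by simp) (approversP_nonempty G _)
        (fun c' _ _ => by rw [phCost_zero_budgetP, phCost_zero_budgetP])
      have hcom : (insert e (∅ : Finset ↥G.edgeFinset)).map Function.Embedding.some
          = insert (some e) (∅ : Finset (Option ↥G.edgeFinset)) := by simp
      have hbud : bMP G (insert e ∅)
          = fun v => if some e ∈ edgeApprovalP G v then 0
              else (fun _ => (0:ℝ)) v + phCost (edgeApprovalP G) (fun _ => 0) (some e) := by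
        funext v
        rw [phCost_zero_budgetP]
        rcases v with v | i
        · show bME G (insert e ∅) v = _
          rw [bME_insert]
          by_cases hv : v ∈ (e : Sym2 α)
          · rw [if_pos hv, if_pos ((mem_edgeApprovalP_inl G).mpr hv)]
          · rw [if_neg hv, if_neg (fun h => hv ((mem_edgeApprovalP_inl G).mp h)), bME_empty]
            norm_num
        · show (1:ℝ)/2 = _
          rw [if_neg (some_not_mem_inr G i)]
          norm_num
      rw [hcom, hbud]
      exact hstep
    · have ih' := ih hMne (matching_subset G (subset_insert e M) hM)
      have hfree := free_of_matching_insert G he hM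
      have hc0 := phCost_bMP_some_of_free G M e hfree
      have hstep := PhragReach.step (A := edgeApprovalP G) (S₀ := ∅) (b₀ := fun _ => 0)
        (M.map Function.Embedding.some) (bMP G M) (some e) ih'
        (by simpa using he) (approversP_nonempty G _)
        (fun c' _ _ => by rw [hc0]; exact phCost_nonneg _ _ _)
      have hcom : (insert e M).map Function.Embedding.some
          = insert (some e) (M.map Function.Embedding.some) := by
        simp [Finset.map_insert]
      have hbud : bMP G (insert e M)
          = fun v => if some e ∈ edgeApprovalP G v then 0
              else bMP G M v + phCost (edgeApprovalP G) (bMP G M) (some e) := by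
        funext v
        rw [hc0, add_zero]
        rcases v with v | i
        · show bME G (insert e M) v = _
          rw [bME_insert]
          by_cases hv : v ∈ (e : Sym2 α)
          · rw [if_pos hv, if_pos ((mem_edgeApprovalP_inl G).mpr hv)]
          · rw [if_neg hv, if_neg (fun h => hv ((mem_edgeApprovalP_inl G).mp h))]
            rfl
        · show (1:ℝ)/2 = _
          rw [if_neg (some_not_mem_inr G i)]
          rfl
      rw [hcom, hbud]
      exact hstep

end Runs
section Main
variable {α : Type} [Fintype α] [DecidableEq α] (G : SimpleGraph α) [DecidableRel G.Adj]

lemma phCost_const_half {C V : Type} [DecidableEq C] [Fintype V]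
    (A : V → Finset C) (b : V → ℝ) (c : C) (hcard : (approvers A c).card = 2)
    (hb : ∀ v ∈ approvers A c, b v = 1/2) : phCost A b c = 0 := by
  rw [phCost_of_card_two _ _ _ hcard, Finset.sum_congr rfl hb, Finset.sum_const, hcard]
  norm_num

lemma none_not_mem_map (M : Finset ↥G.edgeFinset) :
    (none : Option ↥G.edgeFinset) ∉ M.map Function.Embedding.some := by simp

lemma mem_map_some {M : Finset ↥G.edgeFinset} {e : ↥G.edgeFinset} :
    some e ∈ M.map Function.Embedding.some ↔ e ∈ M := by simp

lemma phCost_some_eq (b : α ⊕ Fin 2 → ℝ) (bE : α → ℝ) (hb : ∀ v, b (Sum.inl v) = bE v)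
    (e : ↥G.edgeFinset) :
    phCost (edgeApprovalP G) b (some e) = phCost (edgeApproval G) bE e := by
  rw [phCost_some]
  congr 1
  exact funext hb

lemma singleton_matching (e : ↥G.edgeFinset) : IsMatchingFinset G {e} := by
  intro e1 h1 e2 h2 h12
  simp only [mem_singleton] at h1 h2
  exact absurd (h1.trans h2.symm) h12

lemma matching_insert_of_cost_zero {M : Finset ↥G.edgeFinset} {e : ↥G.edgeFinset}
    (hM : IsMatchingFinset G M) (he : e ∉ M)
    (h : phCost (edgeApproval G) (bME G M) e = 0) :
    IsMatchingFinset G (insert e M) ∧ (∀ x ∈ (e : Sym2 α), ∀ f ∈ M, x ∉ (f : Sym2 α)) := by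
  obtain ⟨a, b, hab, happ, hmem⟩ := exists_endpoints_s14 G e
  rw [phCost_of_card_two _ _ _ (card_approvers₀ G e), happ,
    Finset.sum_insert (by simpa using hab), Finset.sum_singleton] at h
  have hs : (1:ℝ) ≤ bME G M a + bME G M b := by
    have hle : (1 - (bME G M a + bME G M b)) / 2 ≤ 0 := by
      conv_rhs => rw [← h]
      exact le_max_right _ _
    linarith
  have hval : ∀ x : α, bME G M x = 0 ∨ bME G M x = 1/2 := by
    intro x; unfold bME; split <;> simp
  have ha : bME G M a = 1/2 := by
    rcases hval a with h' | h' <;> rcases hval b with h'' | h'' <;>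
      first | assumption | (exfalso; rw [h', h''] at hs; norm_num at hs)
  have hb : bME G M b = 1/2 := by
    rcases hval b with h' | h' <;> [skip; exact h']
    exfalso; rw [ha, h'] at hs; norm_num at hs
  have hfreea : ∀ f ∈ M, a ∉ (f : Sym2 α) := by
    intro f hf hcontra
    have : bME G M a = 0 := by unfold bME; rw [if_pos ⟨f, hf, hcontra⟩]
    rw [this] at ha; norm_num at ha
  have hfreeb : ∀ f ∈ M, b ∉ (f : Sym2 α) := by
    intro f hf hcontra
    have : bME G M b = 0 := by unfold bME; rw [if_pos ⟨f, hf, hcontra⟩]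
    rw [this] at hb; norm_num at hb
  have hfree : ∀ x ∈ (e : Sym2 α), ∀ f ∈ M, x ∉ (f : Sym2 α) := by
    intro x hx f hf
    rcases (hmem x).mp hx with rfl | rfl
    · exact hfreea f hf
    · exact hfreeb f hf
  refine ⟨?_, hfree⟩
  intro e1 h1 e2 h2 h12 x hx
  rcases mem_insert.mp h1 with rfl | h1' <;> rcases mem_insert.mp h2 with rfl | h2'
  · exact absurd rfl h12
  · exact hfree x hx e2 h2'
  · intro hx2
    exact hfree x hx2 e1 h1' hx
  · exact hM e1 h1' e2 h2' h12 x hx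

/-- Lifting a run of the edge election to a run of `E_p` (with `p` bought first). -/
lemma lift_E_run {M : Finset ↥G.edgeFinset} {bE : α → ℝ}
    (h : PhragReach (edgeApproval G) ∅ (fun _ => 0) M bE) :
    (M = ∅ ∧ bE = fun _ => 0) ∨
    (∃ b' : α ⊕ Fin 2 → ℝ,
      PhragReach (edgeApprovalP G) ∅ (fun _ => 0)
        (insert none (M.map Function.Embedding.some)) b' ∧ ∀ v, b' (Sum.inl v) = bE v) := by
  induction h with
  | init => exact Or.inl ⟨rfl, rfl⟩
  | step S b c hreach hcS hne hmin ih =>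
    right
    rcases ih with ⟨rfl, rfl⟩ | ⟨b', hb', hbv⟩
    · -- S was empty; buy none then c in E_p
      have hstep1 := PhragReach.step (A := edgeApprovalP G) (S₀ := ∅) (b₀ := fun _ => 0)
        ∅ (fun _ => 0) none PhragReach.init (by simp) (approversP_nonempty G _)
        (fun c' _ _ => by rw [phCost_zero_budgetP, phCost_zero_budgetP])
      set b₁ : α ⊕ Fin 2 → ℝ := fun v => if none ∈ edgeApprovalP G v then 0
        else (fun _ => (0:ℝ)) v + phCost (edgeApprovalP G) (fun _ => 0) none with hb₁
      have hb₁inl : ∀ v : α, b₁ (Sum.inl v) = 1/2 := by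
        intro v
        rw [hb₁]
        simp only [if_neg (none_not_mem_inl G v), phCost_zero_budgetP, zero_add]
      have hc1 : phCost (edgeApprovalP G) b₁ (some c) = 0 := by
        apply phCost_const_half _ _ _ (card_approversP G _)
        intro v hv
        rw [approvers_some] at hv
        simp only [Finset.mem_map] at hv
        obtain ⟨w, -, rfl⟩ := hv
        exact hb₁inl w
      have hstep2 := PhragReach.step (A := edgeApprovalP G) (S₀ := ∅) (b₀ := fun _ => 0)
        (insert none ∅) b₁ (some c) hstep1 (by simp) (approversP_nonempty G _)
        (fun c' _ _ => by rw [hc1]; exact phCost_nonneg _ _ _)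
      refine ⟨fun v => if some c ∈ edgeApprovalP G v then 0
          else b₁ v + phCost (edgeApprovalP G) b₁ (some c), ?_, ?_⟩
      · have : insert (some c) (insert none (∅ : Finset (Option ↥G.edgeFinset)))
            = insert none (Finset.map Function.Embedding.some (insert c (∅ : Finset ↥G.edgeFinset))) := by
          rw [Finset.map_insert, Finset.insert_comm]
          rfl
        rw [← this]
        exact hstep2
      · intro v
        simp only []
        rw [hc1, add_zero]
        by_cases hv : v ∈ (c : Sym2 α)
        · rw [if_pos ((mem_edgeApprovalP_inl G).mpr hv),
            if_pos ((mem_edgeApproval G).mpr hv)]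
        · rw [if_neg (fun h => hv ((mem_edgeApprovalP_inl G).mp h)),
            if_neg (fun h => hv ((mem_edgeApproval G).mp h)), hb₁inl,
            phCost_zero_budget₀]
          norm_num
    · -- S nonempty case handled uniformly: we have the lifted state
      have hcost : phCost (edgeApprovalP G) b' (some c) = phCost (edgeApproval G) b c :=
        phCost_some_eq G b' b hbv c
      have hnotin : some c ∉ insert none (S.map Function.Embedding.some) := by
        simp only [mem_insert, mem_map_some]
        push_neg
        exact ⟨by simp, hcS⟩
      have hstep := PhragReach.step (A := edgeApprovalP G) (S₀ := ∅) (b₀ := fun _ => 0)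
        (insert none (S.map Function.Embedding.some)) b' (some c) hb' hnotin
        (approversP_nonempty G _)
        (fun c' hc' hc'ne => by
          rcases c' with _ | e'
          · exact absurd (mem_insert_self _ _) hc'
          · have he' : e' ∉ S := fun h =>
              hc' (mem_insert_of_mem ((mem_map_some G).mpr h))
            rw [hcost, phCost_some_eq G b' b hbv e']
            exact hmin e' he' (approvers₀_nonempty G e'))
      refine ⟨fun v => if some c ∈ edgeApprovalP G v then 0
          else b' v + phCost (edgeApprovalP G) b' (some c), ?_, ?_⟩
      · have : insert (some c) (insert none (S.map Function.Embedding.some))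
            = insert none (Finset.map Function.Embedding.some (insert c S)) := by
          rw [Finset.map_insert, Finset.insert_comm]
          rfl
        rw [← this]
        exact hstep
      · intro v
        simp only []
        rw [hcost]
        by_cases hv : v ∈ (c : Sym2 α)
        · rw [if_pos ((mem_edgeApprovalP_inl G).mpr hv),
            if_pos ((mem_edgeApproval G).mpr hv)]
        · rw [if_neg (fun h => hv ((mem_edgeApprovalP_inl G).mp h)),
            if_neg (fun h => hv ((mem_edgeApproval G).mp h)), hbv]

end Main
section Sound
variable {α : Type} [Fintype α] [DecidableEq α] (G : SimpleGraph α) [DecidableRel G.Adj]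

lemma soundP {S : Finset (Option ↥G.edgeFinset)} {b : α ⊕ Fin 2 → ℝ}
    (h : PhragReach (edgeApprovalP G) ∅ (fun _ => 0) S b) :
    (S = ∅ ∧ b = fun _ => 0)
    ∨ (∃ M, M.Nonempty ∧ IsMatchingFinset G M
        ∧ S = M.map Function.Embedding.some ∧ b = bMP G M)
    ∨ (∃ M, S = insert none (M.map Function.Embedding.some) ∧
        ((M = ∅ ∧ ∀ v, b (Sum.inl v) = 1/2) ∨
         (M.Nonempty ∧ ∃ bE, PhragReach (edgeApproval G) ∅ (fun _ => 0) M bE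
            ∧ ∀ v, b (Sum.inl v) = bE v))) := by
  induction h with
  | init => exact Or.inl ⟨rfl, rfl⟩
  | step S b c hreach hcS hne hmin ih =>
    rcases ih with ⟨rfl, rfl⟩ | ⟨M, hMne, hM, rfl, rfl⟩ | ⟨M, rfl, hbr⟩
    · -- from the initial state
      rcases c with _ | e
      · refine Or.inr (Or.inr ⟨∅, by simp, Or.inl ⟨rfl, fun v => ?_⟩⟩)
        simp only [if_neg (none_not_mem_inl G v), phCost_zero_budgetP]
        norm_num
      · refine Or.inr (Or.inl ⟨{e}, singleton_nonempty e, singleton_matching G e, by simp, ?_⟩)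
        funext v
        simp only [phCost_zero_budgetP]
        rcases v with v | i
        · show _ = bME G {e} v
          rw [bME_singleton]
          by_cases hv : v ∈ (e : Sym2 α)
          · rw [if_pos ((mem_edgeApprovalP_inl G).mpr hv), if_pos hv]
          · rw [if_neg (fun h => hv ((mem_edgeApprovalP_inl G).mp h)), if_neg hv]
            norm_num
        · show _ = (1:ℝ)/2
          rw [if_neg (some_not_mem_inr G i)]
          norm_num
    · -- a nonempty matching bought so far, no p
      have hczero : phCost (edgeApprovalP G) (bMP G M) c = 0 := by
        refine le_antisymm ?_ (phCost_nonneg _ _ _)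
        have := hmin none (none_not_mem_map G M) (approversP_nonempty G _)
        rwa [phCost_bMP_none] at this
      rcases c with _ | e
      · refine Or.inr (Or.inr ⟨M, rfl, Or.inr ⟨hMne, bME G M, run_matching_E G M hMne hM,
          fun v => ?_⟩⟩)
        simp only [if_neg (none_not_mem_inl G v), hczero, add_zero]
        rfl
      · have heM : e ∉ M := fun h => hcS ((mem_map_some G).mpr h)
        have hc0' : phCost (edgeApproval G) (bME G M) e = 0 := by
          have := hczero
          rwa [phCost_some] at this
        obtain ⟨hM', hfree⟩ := matching_insert_of_cost_zero G hM heM hc0'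
        refine Or.inr (Or.inl ⟨insert e M, insert_nonempty e M, hM', ?_, ?_⟩)
        · rw [Finset.map_insert]
          rfl
        · funext v
          simp only [hczero, add_zero]
          rcases v with v | i
          · show _ = bME G (insert e M) v
            rw [bME_insert]
            by_cases hv : v ∈ (e : Sym2 α)
            · rw [if_pos ((mem_edgeApprovalP_inl G).mpr hv), if_pos hv]
            · rw [if_neg (fun h => hv ((mem_edgeApprovalP_inl G).mp h)), if_neg hv]
              rfl
          · show _ = (1:ℝ)/2
            rw [if_neg (some_not_mem_inr G i)]
            rfl
    · -- p already bought
      have hcnone : c ≠ none := fun h => hcS (by rw [h]; exact mem_insert_self none _)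
      obtain ⟨e, rfl⟩ := Option.ne_none_iff_exists'.mp hcnone
      have heM : e ∉ M := fun h => hcS (mem_insert_of_mem ((mem_map_some G).mpr h))
      rcases hbr with ⟨rfl, hb12⟩ | ⟨hMne, bE, hbE, hbv⟩
      · -- only p bought so far
        have hc0 : phCost (edgeApprovalP G) b (some e) = 0 := by
          apply phCost_const_half _ _ _ (card_approversP G _)
          intro v hv
          rw [approvers_some] at hv
          simp only [Finset.mem_map] at hv
          obtain ⟨w, -, rfl⟩ := hv
          exact hb12 w
        refine Or.inr (Or.inr ⟨{e}, ?_, Or.inr ⟨singleton_nonempty e, bME G {e},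
          run_matching_E G {e} (singleton_nonempty e) (singleton_matching G e),
          fun v => ?_⟩⟩)
        · ext x
          simp only [Finset.map_empty, Finset.map_singleton, mem_insert, mem_singleton,
            notMem_empty, or_false, Function.Embedding.some_apply]
          tauto
        · simp only [hc0, add_zero]
          rw [bME_singleton]
          by_cases hv : v ∈ (e : Sym2 α)
          · rw [if_pos ((mem_edgeApprovalP_inl G).mpr hv), if_pos hv]
          · rw [if_neg (fun h => hv ((mem_edgeApprovalP_inl G).mp h)), if_neg hv, hb12]
      · -- p plus a nonempty committee bought
        have hcost : phCost (edgeApprovalP G) b (some e) = phCost (edgeApproval G) bE e :=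
          phCost_some_eq G b bE hbv e
        have hstep := PhragReach.step (A := edgeApproval G) (S₀ := ∅) (b₀ := fun _ => 0)
          M bE e hbE heM (approvers₀_nonempty G e)
          (fun e' he' hne' => by
            have h1 := hmin (some e')
              (by
                simp only [mem_insert, mem_map_some]
                push_neg
                exact ⟨by simp, he'⟩)
              (approversP_nonempty G _)
            rwa [hcost, phCost_some_eq G b bE hbv e'] at h1)
        refine Or.inr (Or.inr ⟨insert e M, ?_, Or.inr ⟨insert_nonempty e M, _, hstep,
          fun v => ?_⟩⟩)
        · rw [Finset.map_insert, Finset.insert_comm]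
          rfl
        · simp only [hcost]
          by_cases hv : v ∈ (e : Sym2 α)
          · rw [if_pos ((mem_edgeApprovalP_inl G).mpr hv), if_pos ((mem_edgeApproval G).mpr hv)]
          · rw [if_neg (fun h => hv ((mem_edgeApprovalP_inl G).mp h)),
              if_neg (fun h => hv ((mem_edgeApproval G).mp h)), hbv]

end Sound
section Final
variable {α : Type} [Fintype α] [DecidableEq α] (G : SimpleGraph α) [DecidableRel G.Adj]

lemma run_none : PhragReach (edgeApprovalP G) ∅ (fun _ => 0)
    (insert none (∅ : Finset (Option ↥G.edgeFinset)))
    (fun v => if none ∈ edgeApprovalP G v then 0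
      else (fun _ => (0:ℝ)) v + phCost (edgeApprovalP G) (fun _ => 0) none) :=
  PhragReach.step ∅ (fun _ => 0) none PhragReach.init (by simp) (approversP_nonempty G _)
    (fun c' _ _ => by rw [phCost_zero_budgetP, phCost_zero_budgetP])

lemma part_i (k : ℕ) (hk : 1 ≤ k) (S : Finset (Option ↥G.edgeFinset)) :
    (S ∈ Phragmen (edgeApprovalP G) k ∧ none ∉ S) ↔
      (∃ M : Finset ↥G.edgeFinset, M.card = k ∧ IsMatchingFinset G M ∧
        S = M.map Function.Embedding.some) := by
  constructor
  · rintro ⟨⟨b, hr, hcard⟩, hnone⟩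
    rcases soundP G hr with ⟨rfl, -⟩ | ⟨M, hMne, hM, rfl, -⟩ | ⟨M, rfl, -⟩
    · rw [Finset.card_empty] at hcard; omega
    · exact ⟨M, by rwa [Finset.card_map] at hcard, hM, rfl⟩
    · exact absurd (mem_insert_self none _) hnone
  · rintro ⟨M, hcard, hM, rfl⟩
    have hMne : M.Nonempty := by
      rw [← Finset.card_pos, hcard]; omega
    exact ⟨⟨bMP G M, run_matching_P G M hMne hM, by rw [Finset.card_map, hcard]⟩,
      none_not_mem_map G M⟩

lemma part_ii (k : ℕ) (hk : 1 ≤ k) (S : Finset (Option ↥G.edgeFinset)) :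
    (S ∈ Phragmen (edgeApprovalP G) k ∧ none ∈ S) ↔
      (∃ M ∈ Phragmen (edgeApproval G) (k - 1),
        S = insert none (M.map Function.Embedding.some)) := by
  constructor
  · rintro ⟨⟨b, hr, hcard⟩, hnone⟩
    rcases soundP G hr with ⟨rfl, -⟩ | ⟨M, hMne, hM, rfl, -⟩ | ⟨M, rfl, hbr⟩
    · exact absurd hnone (by simp)
    · exact absurd hnone (none_not_mem_map G M)
    · have hcardM : M.card + 1 = k := by
        rw [Finset.card_insert_of_notMem (none_not_mem_map G M), Finset.card_map] at hcard
        omega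
      have hk1 : k - 1 = M.card := by omega
      rcases hbr with ⟨rfl, -⟩ | ⟨hMne, bE, hbE, -⟩
      · exact ⟨∅, ⟨fun _ => 0, PhragReach.init, by simp [hk1.symm]⟩, rfl⟩
      · exact ⟨M, ⟨bE, hbE, hk1.symm⟩, rfl⟩
  · rintro ⟨M, ⟨bE, hrE, hcardM⟩, rfl⟩
    refine ⟨?_, mem_insert_self none _⟩
    rcases lift_E_run G hrE with ⟨rfl, -⟩ | ⟨b', hb', -⟩
    · have hk1 : k = 1 := by
        rw [Finset.card_empty] at hcardM; omega
      refine ⟨fun v => if none ∈ edgeApprovalP G v then 0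
          else (fun _ => (0:ℝ)) v + phCost (edgeApprovalP G) (fun _ => 0) none, ?_, ?_⟩
      · have := run_none G
        rwa [show insert (none : Option ↥G.edgeFinset) ∅
            = insert none ((∅ : Finset ↥G.edgeFinset).map Function.Embedding.some) by simp]
          at this
      · simp [hk1]
    · refine ⟨b', hb', ?_⟩
      rw [Finset.card_insert_of_notMem (none_not_mem_map G M), Finset.card_map]
      omega

lemma g_injective : Function.Injective
    (fun M : Finset ↥G.edgeFinset => insert none (M.map Function.Embedding.some)) := by
  intro M N h
  apply Finset.map_injective Function.Embedding.some
  have h2 := congrArg (fun s => Finset.erase s none) h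
  simpa [Finset.erase_insert (none_not_mem_map G M),
    Finset.erase_insert (none_not_mem_map G N)] using h2

lemma part_iii (k : ℕ) (hk : 1 ≤ k) :
    Nat.card ↥(Phragmen (edgeApprovalP G) k)
      = Nat.card {M : Finset ↥G.edgeFinset // M.card = k ∧ IsMatchingFinset G M}
        + Nat.card ↥(Phragmen (edgeApproval G) (k - 1)) := by
  have hunion : Phragmen (edgeApprovalP G) k
      = (fun M : Finset ↥G.edgeFinset => M.map Function.Embedding.some)
          '' {M | M.card = k ∧ IsMatchingFinset G M}
        ∪ (fun M : Finset ↥G.edgeFinset => insert none (M.map Function.Embedding.some))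
          '' Phragmen (edgeApproval G) (k - 1) := by
    ext S
    constructor
    · intro hS
      by_cases hnone : none ∈ S
      · obtain ⟨M, hM, rfl⟩ := (part_ii G k hk S).mp ⟨hS, hnone⟩
        exact Or.inr ⟨M, hM, rfl⟩
      · obtain ⟨M, h1, h2, rfl⟩ := (part_i G k hk S).mp ⟨hS, hnone⟩
        exact Or.inl ⟨M, ⟨h1, h2⟩, rfl⟩
    · rintro (⟨M, ⟨h1, h2⟩, rfl⟩ | ⟨M, hM, rfl⟩)
      · exact ((part_i G k hk _).mpr ⟨M, h1, h2, rfl⟩).1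
      · exact ((part_ii G k hk _).mpr ⟨M, hM, rfl⟩).1
  have hdisj : Disjoint
      ((fun M : Finset ↥G.edgeFinset => M.map Function.Embedding.some)
        '' {M | M.card = k ∧ IsMatchingFinset G M})
      ((fun M : Finset ↥G.edgeFinset => insert none (M.map Function.Embedding.some))
        '' Phragmen (edgeApproval G) (k - 1)) := by
    rw [Set.disjoint_left]
    rintro S ⟨M, -, rfl⟩ ⟨N, -, hN⟩
    simp only at hN
    apply none_not_mem_map G M
    rw [← hN]
    exact mem_insert_self none _
  have hA : Set.ncard {M : Finset ↥G.edgeFinset | M.card = k ∧ IsMatchingFinset G M}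
      = Nat.card {M : Finset ↥G.edgeFinset // M.card = k ∧ IsMatchingFinset G M} := by
    rw [← Nat.card_coe_set_eq]
    exact (Nat.card_congr (Equiv.subtypeEquivRight (fun _ => Iff.rfl)))
  have hB : Set.ncard (Phragmen (edgeApproval G) (k - 1))
      = Nat.card ↥(Phragmen (edgeApproval G) (k - 1)) :=
    (Nat.card_coe_set_eq _).symm
  rw [Nat.card_coe_set_eq, hunion,
    Set.ncard_union_eq hdisj (Set.toFinite _) (Set.toFinite _),
    Set.ncard_image_of_injective _ (Finset.map_injective Function.Embedding.some),
    Set.ncard_image_of_injective _ (g_injective G), hA, hB]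

end Final

theorem stmt14 {α : Type} [Fintype α] [DecidableEq α]
    (G : SimpleGraph α) [DecidableRel G.Adj] (k : ℕ) (hk : 1 ≤ k) :
    (∀ S : Finset (Option ↥G.edgeFinset),
      (S ∈ Phragmen (edgeApprovalP G) k ∧ none ∉ S) ↔
        (∃ M : Finset ↥G.edgeFinset, M.card = k ∧ IsMatchingFinset G M ∧
          S = M.map Function.Embedding.some))
    ∧ (∀ S : Finset (Option ↥G.edgeFinset),
        (S ∈ Phragmen (edgeApprovalP G) k ∧ none ∈ S) ↔
          (∃ M ∈ Phragmen (edgeApproval G) (k - 1),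
            S = insert none (M.map Function.Embedding.some)))
    ∧ Nat.card ↥(Phragmen (edgeApprovalP G) k)
        = Nat.card {M : Finset ↥G.edgeFinset // M.card = k ∧ IsMatchingFinset G M}
          + Nat.card ↥(Phragmen (edgeApproval G) (k - 1)) :=
  ⟨part_i G k hk, part_ii G k hk, part_iii G k hk⟩
end

section
/- Let E = (C, V) be an approval election, let 1 ≤ k ≤ |C|, and let N be a natural number such that k · max_{c ∈ C} |{v ∈ V : c ∈ A(v)}| < |V| + N. Let E_N be the election obtained from E by adding N voters with empty approval sets. Then Phase 1 of the Method of Equal Shares on (E_N, k) selects no candidates, and the set of winning committees of the full Method of Equal Shares on (E_N, k) equals Phragmén(E, k). -/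
open Finset

/-- Reachable states of Phase 1 of the Method of Equal Shares started from budgets `b₀`:
repeatedly, a not-yet-selected candidate `c` with minimal per-voter cost `ρ`
(where `∑_{v approving c} min (b v) ρ = 1`) is selected, and each approver `v` of `c`
pays `min (b v) ρ`. Ties are resolved arbitrarily (parallel universes). -/
inductive MESReach {C V : Type} [DecidableEq C] [Fintype V]
    (A : V → Finset C) (b₀ : V → ℝ) : Finset C → (V → ℝ) → Prop
  | init : MESReach A b₀ ∅ b₀
  | step (S : Finset C) (b : V → ℝ) (c : C) (ρ : ℝ) :
      MESReach A b₀ S b → c ∉ S → 0 ≤ ρ →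
      (∑ v ∈ approvers A c, min (b v) ρ) = 1 →
      (∀ c' : C, c' ∉ S → ∀ ρ' : ℝ, 0 ≤ ρ' →
        (∑ v ∈ approvers A c', min (b v) ρ') = 1 → ρ ≤ ρ') →
      MESReach A b₀ (insert c S) (fun v => if c ∈ A v then b v - min (b v) ρ else b v)

/-- Final states of Phase 1 of MEqS with committee size `k`: the process stops as soon
as `k` candidates are selected or no unselected candidate is affordable. -/
def MESFinal {C V : Type} [DecidableEq C] [Fintype V]
    (A : V → Finset C) (k : ℕ) (S : Finset C) (b : V → ℝ) : Prop :=
  MESReach A (fun _ => (k : ℝ) / (Fintype.card V : ℝ)) S b ∧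
    (S.card = k ∨ ∀ c : C, c ∉ S → ∑ v ∈ approvers A c, b v < 1)

/-- Phase 1 of the Method of Equal Shares with parallel-universes tie-breaking:
all committees obtainable when each voter starts with budget `k/|V|`. -/
def MESPhase1 {C V : Type} [DecidableEq C] [Fintype V]
    (A : V → Finset C) (k : ℕ) : Set (Finset C) :=
  {S | ∃ b : V → ℝ, MESFinal A k S b}

/-- The full Method of Equal Shares: run Phase 1, then complete the committee to size `k`
using the Phragmén rule started with the budgets left over from Phase 1. -/
def MESFull {C V : Type} [DecidableEq C] [Fintype V]
    (A : V → Finset C) (k : ℕ) : Set (Finset C) :=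
  {W | ∃ (S : Finset C) (b b' : V → ℝ),
    MESFinal A k S b ∧ PhragReach A S b W b' ∧ W.card = k}

/-- Election `E_N`: the election `E` extended with `N` voters with empty approval sets. -/
def extApproval {C V : Type} (A : V → Finset C) (N : ℕ) : V ⊕ Fin N → Finset C
  | .inl v => A v
  | .inr _ => ∅

section Aux

variable {C V : Type} [DecidableEq C] [Fintype V]

/-- If no candidate's approvers jointly hold one unit at the start, MES Phase 1 stays put. -/
lemma mes_empty (A : V → Finset C) {b₀ : V → ℝ}
    (hb : ∀ c : C, ∑ v ∈ approvers A c, b₀ v < 1)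
    {S : Finset C} {b : V → ℝ} (h : MESReach A b₀ S b) : S = ∅ ∧ b = b₀ := by
  induction h with
  | init => exact ⟨rfl, rfl⟩
  | step S b c ρ h hc hρ hsum hmin ih =>
    exfalso
    have hb2 := ih.2
    subst hb2
    have hle : ∑ v ∈ approvers A c, min (b v) ρ ≤ ∑ v ∈ approvers A c, b v :=
      Finset.sum_le_sum fun v _ => min_le_left _ _
    have := hb c
    linarith

lemma phrag_eq_init (A : V → Finset C) {b₀ b : V → ℝ} {S : Finset C}
    (h : PhragReach A ∅ b₀ S b) : S = ∅ → b = b₀ := by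
  induction h with
  | init => intro _; rfl
  | step S b c h hcS hne hmin ih => intro hS; simp at hS

lemma phCost_const (A : V → Finset C) {β : ℝ}
    (hs : ∀ c : C, β * ((approvers A c).card : ℝ) < 1)
    {c : C} (hc : (approvers A c).Nonempty) :
    phCost A (fun _ => β) c = 1 / ((approvers A c).card : ℝ) - β := by
  have hn : (0:ℝ) < ((approvers A c).card : ℝ) := by
    exact_mod_cast Finset.card_pos.mpr hc
  have hsum : ∑ _v ∈ approvers A c, β = ((approvers A c).card : ℝ) * β := by
    rw [Finset.sum_const, nsmul_eq_mul]
  have h1 : (1 - ((approvers A c).card : ℝ) * β) / ((approvers A c).card : ℝ)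
      = 1 / ((approvers A c).card : ℝ) - β := by
    field_simp
  have hβle : β ≤ 1 / ((approvers A c).card : ℝ) := by
    rw [le_div_iff₀ hn]; linarith [hs c]
  rw [phCost, hsum, h1, max_eq_right (by linarith)]

/-- Phragmén from constant budget `β₁` coincides with Phragmén from constant budget `β₂`
as soon as at least one candidate has been bought, provided both budgets are small. -/
lemma phrag_shift (A : V → Finset C) {β₁ β₂ : ℝ}
    (h₁ : ∀ c : C, β₁ * ((approvers A c).card : ℝ) < 1)
    (h₂ : ∀ c : C, β₂ * ((approvers A c).card : ℝ) < 1)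
    {S : Finset C} {b : V → ℝ}
    (h : PhragReach A ∅ (fun _ => β₁) S b) :
    S.Nonempty → PhragReach A ∅ (fun _ => β₂) S b := by
  induction h with
  | init => intro hS; simp at hS
  | step S b c h hcS hne hmin ih =>
    intro _
    rcases S.eq_empty_or_nonempty with rfl | hSne
    · have hb : b = fun _ => β₁ := phrag_eq_init A h rfl
      subst hb
      have hmin₂ : ∀ c' : C, c' ∉ (∅ : Finset C) → (approvers A c').Nonempty →
          phCost A (fun _ => β₂) c ≤ phCost A (fun _ => β₂) c' := by
        intro c' hc' hne'
        have hm := hmin c' hc' hne'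
        rw [phCost_const A h₁ hne, phCost_const A h₁ hne'] at hm
        rw [phCost_const A h₂ hne, phCost_const A h₂ hne']
        linarith
      have hstep := PhragReach.step (A := A) (S₀ := (∅ : Finset C))
        (b₀ := fun _ => β₂) ∅ (fun _ => β₂) c PhragReach.init (by simp) hne hmin₂
      have hfun : (fun v => if c ∈ A v then 0 else (fun _ => β₂) v + phCost A (fun _ => β₂) c)
          = (fun v => if c ∈ A v then 0 else (fun _ => β₁) v + phCost A (fun _ => β₁) c) := by
        funext v
        by_cases hv : c ∈ A v
        · simp [hv]
        · simp only [if_neg hv]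
          rw [phCost_const A h₁ hne, phCost_const A h₂ hne]
          ring
      rw [← hfun]
      exact hstep
    · exact PhragReach.step S b c (ih hSne) hcS hne hmin

variable (N : ℕ)

lemma approvers_ext (A : V → Finset C) (c : C) :
    approvers (extApproval A N) c
      = (approvers A c).map ⟨Sum.inl, Sum.inl_injective⟩ := by
  ext v
  cases v with
  | inl v => simp only [approvers, Finset.mem_filter, Finset.mem_univ, true_and]; simp [extApproval]
  | inr j => simp only [approvers, Finset.mem_filter, Finset.mem_univ, true_and]; simp [extApproval]

lemma card_ext (A : V → Finset C) (c : C) :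
    (approvers (extApproval A N) c).card = (approvers A c).card := by
  rw [approvers_ext, Finset.card_map]

lemma sum_ext (A : V → Finset C) (c : C) (g : V ⊕ Fin N → ℝ) :
    ∑ v ∈ approvers (extApproval A N) c, g v
      = ∑ v ∈ approvers A c, g (Sum.inl v) := by
  rw [approvers_ext, Finset.sum_map]
  rfl

lemma nonempty_ext (A : V → Finset C) (c : C) :
    (approvers (extApproval A N) c).Nonempty ↔ (approvers A c).Nonempty := by
  rw [← Finset.card_pos, ← Finset.card_pos, card_ext]

lemma phCost_ext (A : V → Finset C) (b : V ⊕ Fin N → ℝ) (c : C) :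
    phCost (extApproval A N) b c = phCost A (fun v => b (Sum.inl v)) c := by
  unfold phCost
  rw [sum_ext, card_ext]

/-- Projecting a Phragmén run of the extended election to the original voters. -/
lemma phrag_proj (A : V → Finset C) {b₀ b : V ⊕ Fin N → ℝ} {S : Finset C}
    (h : PhragReach (extApproval A N) ∅ b₀ S b) :
    PhragReach A ∅ (fun v => b₀ (Sum.inl v)) S (fun v => b (Sum.inl v)) := by
  induction h with
  | init => exact PhragReach.init
  | step S b c h hcS hne hmin ih =>
    have hmin' : ∀ c' : C, c' ∉ S → (approvers A c').Nonempty →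
        phCost A (fun v => b (Sum.inl v)) c ≤ phCost A (fun v => b (Sum.inl v)) c' := by
      intro c' hc' hne'
      have := hmin c' hc' ((nonempty_ext N A c').mpr hne')
      rwa [phCost_ext, phCost_ext] at this
    have hstep := PhragReach.step (A := A) (S₀ := (∅ : Finset C))
      (b₀ := fun v => b₀ (Sum.inl v)) S (fun v => b (Sum.inl v)) c ih hcS
      ((nonempty_ext N A c).mp hne) hmin'
    have hfun : (fun v => if c ∈ A v then 0
          else b (Sum.inl v) + phCost A (fun v => b (Sum.inl v)) c)
        = (fun v : V => (fun v' => if c ∈ extApproval A N v' then 0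
          else b v' + phCost (extApproval A N) b c) (Sum.inl v)) := by
      funext v
      rw [phCost_ext]
      rfl
    rw [← hfun]
    exact hstep

/-- Lifting a Phragmén run of the original election to the extended election. -/
lemma phrag_lift (A : V → Finset C) {b₀ b : V → ℝ} {S : Finset C} (r₀ : ℝ)
    (h : PhragReach A ∅ b₀ S b) :
    ∃ r : ℝ, PhragReach (extApproval A N) ∅ (Sum.elim b₀ fun _ => r₀) S
      (Sum.elim b fun _ => r) := by
  induction h with
  | init => exact ⟨r₀, PhragReach.init⟩
  | step S b c h hcS hne hmin ih =>
    obtain ⟨r, hr⟩ := ih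
    refine ⟨r + phCost A b c, ?_⟩
    have hproj : (fun v : V => Sum.elim b (fun _ : Fin N => (r:ℝ)) (Sum.inl v)) = b := rfl
    have hcost : phCost (extApproval A N) (Sum.elim b fun _ => r) c = phCost A b c := by
      rw [phCost_ext, hproj]
    have hmin' : ∀ c' : C, c' ∉ S → (approvers (extApproval A N) c').Nonempty →
        phCost (extApproval A N) (Sum.elim b fun _ => r) c
          ≤ phCost (extApproval A N) (Sum.elim b fun _ => r) c' := by
      intro c' hc' hne'
      rw [phCost_ext, phCost_ext, hproj]
      exact hmin c' hc' ((nonempty_ext N A c').mp hne')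
    have hfun : (fun v' => if c ∈ extApproval A N v' then 0
          else Sum.elim b (fun _ => r) v' + phCost (extApproval A N) (Sum.elim b fun _ => r) c)
        = Sum.elim (fun v => if c ∈ A v then 0 else b v + phCost A b c)
            (fun _ => r + phCost A b c) := by
      funext v'
      cases v' with
      | inl v => simp [extApproval, hcost]
      | inr j => simp [extApproval, hcost]
    have hstep := PhragReach.step (A := extApproval A N) (S₀ := (∅ : Finset C))
      (b₀ := Sum.elim b₀ fun _ => r₀) S (Sum.elim b fun _ => r) c hr hcS
      ((nonempty_ext N A c).mpr hne) hmin'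
    rw [hfun] at hstep
    exact hstep

end Aux

theorem stmt17 {C V : Type} [Fintype C] [DecidableEq C] [Fintype V]
    (A : V → Finset C) (k : ℕ) (hk1 : 1 ≤ k) (hk2 : k ≤ Fintype.card C)
    (N : ℕ) (hN : ∀ c : C, k * (approvers A c).card < Fintype.card V + N) :
    MESPhase1 (extApproval A N) k = {(∅ : Finset C)}
    ∧ MESFull (extApproval A N) k = Phragmen A k := by
  set β : ℝ := (k : ℝ) / (Fintype.card (V ⊕ Fin N) : ℝ) with hβdef
  have hcardVN : Fintype.card (V ⊕ Fin N) = Fintype.card V + N := by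
    simp [Fintype.card_sum]
  have hMpos : 0 < Fintype.card V + N := by
    have hC : 0 < Fintype.card C := lt_of_lt_of_le hk1 hk2
    obtain ⟨c₀⟩ := Fintype.card_pos_iff.mp hC
    exact lt_of_le_of_lt (Nat.zero_le _) (hN c₀)
  have hMposR : (0:ℝ) < ((Fintype.card V + N : ℕ) : ℝ) := by exact_mod_cast hMpos
  have hsmallβ : ∀ c : C, β * ((approvers A c).card : ℝ) < 1 := by
    intro c
    rw [hβdef, hcardVN, div_mul_eq_mul_div, div_lt_one hMposR]
    exact_mod_cast hN c
  have hsmall0 : ∀ c : C, (0:ℝ) * ((approvers A c).card : ℝ) < 1 := by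
    intro c; simp
  have hb' : ∀ c : C, ∑ _v ∈ approvers (extApproval A N) c, β < 1 := by
    intro c
    rw [Finset.sum_const, nsmul_eq_mul, card_ext, mul_comm]
    exact hsmallβ c
  constructor
  · ext S
    simp only [MESPhase1, MESFinal, Set.mem_setOf_eq, Set.mem_singleton_iff]
    constructor
    · rintro ⟨b, hreach, -⟩
      exact (mes_empty (extApproval A N) hb' hreach).1
    · rintro rfl
      exact ⟨fun _ => β, MESReach.init, Or.inr fun c _ => hb' c⟩
  · ext W
    simp only [MESFull, Phragmen, Set.mem_setOf_eq]
    constructor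
    · rintro ⟨S, b, b', ⟨hmes, -⟩, hph, hcardW⟩
      obtain ⟨rfl, rfl⟩ := mes_empty (extApproval A N) hb' hmes
      have hproj := phrag_proj N A hph
      have hW : W.Nonempty := Finset.card_pos.mp (by rw [hcardW]; exact hk1)
      exact ⟨fun v => b' (Sum.inl v),
        phrag_shift A hsmallβ hsmall0 hproj hW, hcardW⟩
    · rintro ⟨b, hreach, hcardW⟩
      have hW : W.Nonempty := Finset.card_pos.mp (by rw [hcardW]; exact hk1)
      have h1 := phrag_shift A hsmall0 hsmallβ hreach hW
      obtain ⟨r, h2⟩ := phrag_lift N A β h1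
      have helim : (Sum.elim (fun _ : V => β) (fun _ : Fin N => β))
          = (fun _ : V ⊕ Fin N => β) := by
        funext v'; cases v' <;> rfl
      rw [helim] at h2
      exact ⟨∅, fun _ => β, Sum.elim b fun _ => r,
        ⟨MESReach.init, Or.inr fun c _ => hb' c⟩, h2, hcardW⟩
end
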